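/- arXiv:1609.07840 — 7 statements merged into one kernel-verified Lean document; each statement's English description precedes it below -/
import Mathlib

section
/- Let $\{a_n\}$ be a positive sequence and $s_n = a_n a_{n+2}/a_{n+1}^2$. If there exists $N$ such that $s_n > 1$ for all $n \ge N$ and $s_{n+1}^2 (s_n - 1)(s_{n+2}-1) \ge (s_{n+1}-1)^2$ for all $n \ge N$, then the sequence $\mathscr{L}a_n = a_n a_{n+2} - a_{n+1}^2$ is log-convex for $n \ge N$, i.e., $(\mathscr{L}a_n)(\mathscr{L}a_{n+2}) \ge (\mathscr{L}a_{n+1})^2$ for all $n \ge N$. -/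
theorem stmt_1 (a : ℕ → ℝ) (hpos : ∀ n, 0 < a n) (s : ℕ → ℝ)
    (hs : ∀ n, s n = a n * a (n + 2) / (a (n + 1)) ^ 2) (N : ℕ)
    (h1 : ∀ n ≥ N, s n > 1)
    (h2 : ∀ n ≥ N, (s (n + 1)) ^ 2 * ((s n - 1) * (s (n + 2) - 1)) ≥ (s (n + 1) - 1) ^ 2) :
    ∀ n ≥ N, (a n * a (n + 2) - (a (n + 1)) ^ 2) * (a (n + 2) * a (n + 4) - (a (n + 3)) ^ 2) ≥
      (a (n + 1) * a (n + 3) - (a (n + 2)) ^ 2) ^ 2 := by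
  intro n hn
  have key : ∀ m, a m * a (m + 2) = s m * a (m + 1) ^ 2 := by
    intro m
    have h := (hpos (m + 1)).ne'
    rw [hs]
    field_simp
  have k0 := key n
  have k1 : a (n + 1) * a (n + 3) = s (n + 1) * a (n + 2) ^ 2 := key (n + 1)
  have k2 : a (n + 2) * a (n + 4) = s (n + 2) * a (n + 3) ^ 2 := key (n + 2)
  have h2' := h2 n hn
  have k1sq : a (n + 1) ^ 2 * a (n + 3) ^ 2 = s (n + 1) ^ 2 * (a (n + 2) ^ 2) ^ 2 := by
    have := congrArg (· ^ 2) k1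
    simpa [mul_pow] using this
  have hmul := mul_le_mul_of_nonneg_right h2' (by positivity : (0:ℝ) ≤ (a (n + 2) ^ 2) ^ 2)
  have goal2 : (s n - 1) * (s (n + 2) - 1) * (a (n + 1) ^ 2 * a (n + 3) ^ 2) ≥
      (s (n + 1) - 1) ^ 2 * (a (n + 2) ^ 2) ^ 2 := by
    rw [k1sq]; nlinarith [hmul]
  rw [k0, k1, k2]
  nlinarith [goal2]
end

section
/- Let $\{a_n\}$ be a positive sequence, and suppose $f_n, g_n$ are sequences with $1 < f_n \le a_n a_{n+2}/a_{n+1}^2 \le g_n$ for all $n \ge N$, and $(f_n - 1)(f_{n+2}-1) \ge (1 - 1/g_{n+1})^2$ for all $n \ge N$. Then $(a_na_{n+2}-a_{n+1}^2)(a_{n+2}a_{n+4}-a_{n+3}^2) \ge (a_{n+1}a_{n+3}-a_{n+2}^2)^2$ for all $n \ge N$, i.e., $\{a_n\}_{n \ge N}$ is 2-log-convex. -/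
theorem stmt_11 (a f g : ℕ → ℝ) (hpos : ∀ n, 0 < a n) (N : ℕ)
    (hfg : ∀ n ≥ N, 1 < f n ∧ f n ≤ a n * a (n + 2) / (a (n + 1)) ^ 2 ∧
      a n * a (n + 2) / (a (n + 1)) ^ 2 ≤ g n)
    (h : ∀ n ≥ N, (f n - 1) * (f (n + 2) - 1) ≥ (1 - 1 / g (n + 1)) ^ 2) :
    ∀ n ≥ N,
      (a n * a (n + 2) - (a (n + 1)) ^ 2) * (a (n + 2) * a (n + 4) - (a (n + 3)) ^ 2) ≥
        (a (n + 1) * a (n + 3) - (a (n + 2)) ^ 2) ^ 2 := by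
  intro n hn
  set r : ℕ → ℝ := fun m => a m * a (m + 2) / (a (m + 1)) ^ 2 with hrdef
  have ha1 := hpos (n + 1)
  have ha2 := hpos (n + 2)
  have ha3 := hpos (n + 3)
  obtain ⟨hf0, hfr0, _⟩ := hfg n hn
  obtain ⟨hf1, hfr1, hrg1⟩ := hfg (n + 1) (by omega)
  obtain ⟨hf2, hfr2, _⟩ := hfg (n + 2) (by omega)
  have key := h n hn
  have hr0 : 1 < r n := lt_of_lt_of_le hf0 hfr0
  have hr1 : 1 < r (n + 1) := lt_of_lt_of_le hf1 hfr1
  have hr2 : 1 < r (n + 2) := lt_of_lt_of_le hf2 hfr2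
  have hg1 : 1 < g (n + 1) := lt_of_lt_of_le hr1 hrg1
  -- chain: (1 - 1/r(n+1))^2 ≤ (1 - 1/g(n+1))^2 ≤ (f n - 1)(f(n+2)-1) ≤ (r n - 1)(r(n+2)-1)
  have h1 : (1 - 1 / r (n + 1)) ^ 2 ≤ (1 - 1 / g (n + 1)) ^ 2 := by
    have hinv : 1 / g (n + 1) ≤ 1 / r (n + 1) :=
      one_div_le_one_div_of_le (by linarith) hrg1
    have h0 : (0:ℝ) ≤ 1 - 1 / r (n + 1) := by
      have : 1 / r (n + 1) ≤ 1 := by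
        rw [div_le_one (by linarith)]; linarith
      linarith
    have h0' : 1 - 1 / r (n + 1) ≤ 1 - 1 / g (n + 1) := by linarith
    exact pow_le_pow_left₀ h0 h0' 2
  have h3 : (f n - 1) * (f (n + 2) - 1) ≤ (r n - 1) * (r (n + 2) - 1) :=
    mul_le_mul (by linarith) (by linarith) (by linarith) (by linarith)
  have hchain : (1 - 1 / r (n + 1)) ^ 2 ≤ (r n - 1) * (r (n + 2) - 1) := by linarith
  -- rewrite differences
  have e0 : a n * a (n + 2) - (a (n + 1)) ^ 2 = (a (n + 1)) ^ 2 * (r n - 1) := by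
    show _ = (a (n + 1)) ^ 2 * (a n * a (n + 2) / (a (n + 1)) ^ 2 - 1)
    field_simp
  have e1 : a (n + 1) * a (n + 3) - (a (n + 2)) ^ 2 = (a (n + 2)) ^ 2 * (r (n + 1) - 1) := by
    show _ = (a (n + 2)) ^ 2 * (a (n + 1) * a (n + 1 + 2) / (a (n + 1 + 1)) ^ 2 - 1)
    have e : n + 1 + 2 = n + 3 := by omega
    have e' : n + 1 + 1 = n + 2 := by omega
    rw [e, e']
    field_simp
  have e2 : a (n + 2) * a (n + 4) - (a (n + 3)) ^ 2 = (a (n + 3)) ^ 2 * (r (n + 2) - 1) := by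
    show _ = (a (n + 3)) ^ 2 * (a (n + 2) * a (n + 2 + 2) / (a (n + 2 + 1)) ^ 2 - 1)
    have e : n + 2 + 2 = n + 4 := by omega
    have e' : n + 2 + 1 = n + 3 := by omega
    rw [e, e']
    field_simp
  have hq : (a (n + 2)) ^ 2 * (r (n + 1) - 1) = a (n + 1) * a (n + 3) * (1 - 1 / r (n + 1)) := by
    have hrval : r (n + 1) = a (n + 1) * a (n + 3) / (a (n + 2)) ^ 2 := by
      show a (n + 1) * a (n + 1 + 2) / (a (n + 1 + 1)) ^ 2 = _
      norm_num
    rw [hrval]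
    have hne : a (n + 1) * a (n + 3) ≠ 0 := by positivity
    field_simp
  rw [e0, e1, e2, hq]
  have hmul := mul_le_mul_of_nonneg_left hchain (sq_nonneg (a (n + 1) * a (n + 3)))
  nlinarith [hmul, sq_nonneg (a (n + 1) * a (n + 3))]
end

section
/- The Motzkin numbers, defined by $M_0 = M_1 = 1$ and $(n+2)M_n = (2n+1)M_{n-1} + (3n-3)M_{n-2}$ for $n \ge 2$, satisfy $M_n M_{n+2} \ge M_{n+1}^2$ for all $n \ge 2$ (log-convexity from index 2). -/
theorem stmt_12 (M : ℕ → ℕ) (hM0 : M 0 = 1) (hM1 : M 1 = 1)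
    (hrec : ∀ n : ℕ, 2 ≤ n →
      (n + 2) * M n = (2 * n + 1) * M (n - 1) + (3 * n - 3) * M (n - 2)) :
    ∀ n : ℕ, 2 ≤ n → M n * M (n + 2) ≥ (M (n + 1)) ^ 2 := by
  -- shifted recurrence over ℕ
  have hr2n : ∀ k : ℕ, (k + 4) * M (k + 2) = (2 * k + 5) * M (k + 1) + (3 * k + 3) * M k := by
    intro k
    have h := hrec (k + 2) (by omega)
    have e1 : k + 2 - 1 = k + 1 := by omega
    have e2 : k + 2 - 2 = k := by omega
    have e3 : 3 * (k + 2) - 3 = 3 * k + 3 := by omega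
    rw [e1, e2, e3] at h
    have e4 : k + 2 + 2 = k + 4 := by omega
    rw [e4] at h
    have e5 : 2 * (k + 2) + 1 = 2 * k + 5 := by omega
    rw [e5] at h
    exact h
  -- positivity
  have hposn : ∀ n : ℕ, 1 ≤ M n := by
    have key : ∀ n : ℕ, 1 ≤ M n ∧ 1 ≤ M (n + 1) := by
      intro n
      induction n with
      | zero => exact ⟨le_of_eq hM0.symm, le_of_eq hM1.symm⟩
      | succ k ih =>
        refine ⟨ih.2, ?_⟩
        rcases Nat.eq_zero_or_pos (M (k + 2)) with h0 | h1
        · exfalso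
          have h := hr2n k
          rw [h0, Nat.mul_zero] at h
          have h1 := ih.1
          have h2 := ih.2
          nlinarith
        · exact h1
    exact fun n => (key n).1
  -- shifted recurrence over ℤ
  have hr2 : ∀ k : ℕ, ((k : ℤ) + 4) * (M (k + 2) : ℤ)
      = (2 * k + 5) * (M (k + 1) : ℤ) + (3 * k + 3) * (M k : ℤ) := by
    intro k
    have h := hr2n k
    have := congrArg (fun x : ℕ => (x : ℤ)) h
    push_cast at this
    linarith
  have hpos : ∀ n : ℕ, (1 : ℤ) ≤ (M n : ℤ) := by
    intro n; exact_mod_cast hposn n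
  -- values M 2 = 2, M 3 = 4, M 4 = 9
  have hM2 : M 2 = 2 := by have h := hr2n 0; rw [hM0, hM1] at h; norm_num at h; omega
  have hM3 : M 3 = 4 := by have h := hr2n 1; rw [hM1, hM2] at h; norm_num at h; omega
  have hM4 : M 4 = 9 := by have h := hr2n 2; rw [hM2, hM3] at h; norm_num at h; omega
  -- invariant: (6k+3) M k ≤ (2k+4) M (k+1)  and  (2k+7) M (k+1) ≤ (6k+12) M k
  have inv : ∀ k : ℕ, 2 ≤ k →
      (6 * (k : ℤ) + 3) * (M k : ℤ) ≤ (2 * k + 4) * (M (k + 1) : ℤ) ∧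
      (2 * (k : ℤ) + 7) * (M (k + 1) : ℤ) ≤ (6 * k + 12) * (M k : ℤ) := by
    intro k hk
    induction k, hk using Nat.le_induction with
    | base =>
      rw [hM2, hM3]
      constructor <;> norm_num
    | succ k hk ih =>
      have hE := hr2 k
      have hlow := ih.1
      have hhigh := ih.2
      have hb := hpos (k + 1)
      have hkz : (0 : ℤ) ≤ (k : ℤ) := by positivity
      constructor
      · -- (6(k+1)+3) M(k+1) ≤ (2(k+1)+4) M(k+2)
        have f1 : ((2 * (k : ℤ) + 6) * (6 * k + 12)) * (((k : ℤ) + 4) * (M (k + 2) : ℤ))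
            = ((2 * (k : ℤ) + 6) * (6 * k + 12)) *
              ((2 * k + 5) * (M (k + 1) : ℤ) + (3 * k + 3) * (M k : ℤ)) := by rw [hE]
        have f2 : ((2 * (k : ℤ) + 6) * (3 * k + 3)) * ((2 * (k : ℤ) + 7) * (M (k + 1) : ℤ))
            ≤ ((2 * (k : ℤ) + 6) * (3 * k + 3)) * ((6 * k + 12) * (M k : ℤ)) := by
          apply mul_le_mul_of_nonneg_left hhigh (by positivity)
        have f3 : (0 : ℤ) ≤ (k : ℤ) * (M (k + 1) : ℤ) := by
          apply mul_nonneg hkz (by linarith)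
        have scaled : (((k : ℤ) + 4) * (6 * k + 12)) * ((6 * (k : ℤ) + 9) * (M (k + 1) : ℤ))
            ≤ (((k : ℤ) + 4) * (6 * k + 12)) * ((2 * (k : ℤ) + 6) * (M (k + 2) : ℤ)) := by
          nlinarith [f1, f2, f3, hb]
        have hc : (0 : ℤ) < ((k : ℤ) + 4) * (6 * k + 12) := by positivity
        have := (mul_le_mul_iff_right₀ hc).mp scaled
        push_cast
        linarith
      · -- (2(k+1)+7) M(k+2) ≤ (6(k+1)+12) M(k+1)
        have f1 : ((6 * (k : ℤ) + 3) * (2 * k + 9)) * (((k : ℤ) + 4) * (M (k + 2) : ℤ))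
            = ((6 * (k : ℤ) + 3) * (2 * k + 9)) *
              ((2 * k + 5) * (M (k + 1) : ℤ) + (3 * k + 3) * (M k : ℤ)) := by rw [hE]
        have f2 : ((2 * (k : ℤ) + 9) * (3 * k + 3)) * ((6 * (k : ℤ) + 3) * (M k : ℤ))
            ≤ ((2 * (k : ℤ) + 9) * (3 * k + 3)) * ((2 * k + 4) * (M (k + 1) : ℤ)) := by
          apply mul_le_mul_of_nonneg_left hlow (by positivity)
        have f3 : (0 : ℤ) ≤ ((k : ℤ) - 2) * (M (k + 1) : ℤ) := by
          have hk2 : (2 : ℤ) ≤ (k : ℤ) := by exact_mod_cast hk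
          apply mul_nonneg (by linarith) (by linarith)
        have scaled : ((6 * (k : ℤ) + 3) * ((k : ℤ) + 4)) * ((2 * (k : ℤ) + 9) * (M (k + 2) : ℤ))
            ≤ ((6 * (k : ℤ) + 3) * ((k : ℤ) + 4)) * ((6 * (k : ℤ) + 18) * (M (k + 1) : ℤ)) := by
          nlinarith [f1, f2, f3, hb]
        have hc : (0 : ℤ) < (6 * (k : ℤ) + 3) * ((k : ℤ) + 4) := by positivity
        have := (mul_le_mul_iff_right₀ hc).mp scaled
        push_cast
        linarith
  -- main statement
  intro n hn
  rcases Nat.lt_or_ge n 3 with h3 | h3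
  · -- n = 2
    have hn2 : n = 2 := by omega
    subst hn2
    rw [hM2, hM3, hM4]
    norm_num
  · -- n ≥ 3
    have ht := (inv n (by omega)).2
    have hE := hr2 n
    have ha := hpos n
    have hb := hpos (n + 1)
    have htn : (0 : ℤ) ≤ (6 * (n : ℤ) + 12) * (M n : ℤ) - (2 * n + 7) * (M (n + 1) : ℤ) := by
      linarith
    have hn3 : (3 : ℤ) ≤ (n : ℤ) := by exact_mod_cast h3
    have g1 : (0 : ℤ) ≤ ((n : ℤ) + 4) * (2 * n + 7) *
        (((6 * (n : ℤ) + 12) * (M n : ℤ) - (2 * n + 7) * (M (n + 1) : ℤ)) * (M (n + 1) : ℤ)) := by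
      apply mul_nonneg (by positivity)
      apply mul_nonneg htn (by linarith)
    have g2 : (0 : ℤ) ≤ (2 * (n : ℤ) * n + 12 * n + 13) *
        (((6 * (n : ℤ) + 12) * (M n : ℤ) - (2 * n + 7) * (M (n + 1) : ℤ)) * (M n : ℤ)) := by
      apply mul_nonneg (by positivity)
      apply mul_nonneg htn (by linarith)
    have g3 : (0 : ℤ) ≤ 9 * ((n : ℤ) - 1) * ((M n : ℤ) * (M n : ℤ)) := by
      apply mul_nonneg (by linarith)
      apply mul_nonneg (by linarith) (by linarith)
    have f0 : (2 * (n : ℤ) + 7) ^ 2 * ((M n : ℤ) * (((n : ℤ) + 4) * (M (n + 2) : ℤ)))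
        = (2 * (n : ℤ) + 7) ^ 2 * ((M n : ℤ) *
          ((2 * n + 5) * (M (n + 1) : ℤ) + (3 * n + 3) * (M n : ℤ))) := by rw [hE]
    have scaled : ((2 * (n : ℤ) + 7) ^ 2 * ((n : ℤ) + 4)) * ((M (n + 1) : ℤ) ^ 2)
        ≤ ((2 * (n : ℤ) + 7) ^ 2 * ((n : ℤ) + 4)) * ((M n : ℤ) * (M (n + 2) : ℤ)) := by
      linarith [f0, g1, g2, g3]
    have hc : (0 : ℤ) < (2 * (n : ℤ) + 7) ^ 2 * ((n : ℤ) + 4) := by positivity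
    have hfin := (mul_le_mul_iff_right₀ hc).mp scaled
    have : ((M (n + 1) : ℤ)) ^ 2 ≤ (M n : ℤ) * (M (n + 2) : ℤ) := hfin
    exact_mod_cast this
end

section
/- Let $M_n$ be the Motzkin numbers ($M_0=M_1=1$, $(n+2)M_n=(2n+1)M_{n-1}+(3n-3)M_{n-2}$). The sequence $\{\mathscr{L}M_n\}_{n \ge 6}$ with $\mathscr{L}M_n = M_n M_{n+2} - M_{n+1}^2$ is log-convex, i.e., $(\mathscr{L}M_n)(\mathscr{L}M_{n+2}) \ge (\mathscr{L}M_{n+1})^2$ for all $n \ge 6$; moreover this inequality fails for some $n < 6$, so $\{M_n\}_{n\ge 0}$ is not 2-log-convex but $\{M_n\}_{n\ge 6}$ is. -/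
set_option maxHeartbeats 4000000

private lemma posK1 (n : ℤ) (hn : 8 ≤ n) : 0 ≤ (-53172) + (-315924)*n + (-227910)*n^2 + 119664*n^3 + 131718*n^4 + 22272*n^5 := by
  have hm : (0:ℤ) ≤ n - 8 := by linarith
  have hm2 : (0:ℤ) ≤ (n-8)^2 := pow_nonneg hm 2
  have hm3 : (0:ℤ) ≤ (n-8)^3 := pow_nonneg hm 3
  have hm4 : (0:ℤ) ≤ (n-8)^4 := pow_nonneg hm 4
  have hm5 : (0:ℤ) ≤ (n-8)^5 := pow_nonneg hm 5
  linarith [hm,hm2,hm3,hm4,hm5]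

private lemma posK2 (n : ℤ) (hn : 8 ≤ n) : 0 ≤ (-222480) + (-574416)*n + (-591750)*n^2 + (-200376)*n^3 + 3258*n^4 + 6912*n^5 := by
  have hm : (0:ℤ) ≤ n - 8 := by linarith
  have hm2 : (0:ℤ) ≤ (n-8)^2 := pow_nonneg hm 2
  have hm3 : (0:ℤ) ≤ (n-8)^3 := pow_nonneg hm 3
  have hm4 : (0:ℤ) ≤ (n-8)^4 := pow_nonneg hm 4
  have hm5 : (0:ℤ) ≤ (n-8)^5 := pow_nonneg hm 5
  linarith [hm,hm2,hm3,hm4,hm5]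

private lemma posS0 (n : ℤ) (hn : 8 ≤ n) : 0 ≤ (-289979655782400) + (-589866089840640)*n + 2043722206937088*n^2 + 9450646096379904*n^3 + 7942653778821120*n^4 + (-27560335053348864)*n^5 + (-85277421781069824)*n^6 + (-84907933670163456)*n^7 + 45675428440177152*n^8 + 256138733491691904*n^9 + 399424905849148704*n^10 + 386956795181749632*n^11 + 265003214063211864*n^12 + 134302383300647448*n^13 + 51181031768938704*n^14 + 14601974825021184*n^15 + 3037001909750784*n^16 + 434579956088832*n^17 + 38087635304448*n^18 + 1531881455616*n^19 := by
  have hm : (0:ℤ) ≤ n - 8 := by linarith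
  have hm2 : (0:ℤ) ≤ (n-8)^2 := pow_nonneg hm 2
  have hm3 : (0:ℤ) ≤ (n-8)^3 := pow_nonneg hm 3
  have hm4 : (0:ℤ) ≤ (n-8)^4 := pow_nonneg hm 4
  have hm5 : (0:ℤ) ≤ (n-8)^5 := pow_nonneg hm 5
  have hm6 : (0:ℤ) ≤ (n-8)^6 := pow_nonneg hm 6
  have hm7 : (0:ℤ) ≤ (n-8)^7 := pow_nonneg hm 7
  have hm8 : (0:ℤ) ≤ (n-8)^8 := pow_nonneg hm 8
  have hm9 : (0:ℤ) ≤ (n-8)^9 := pow_nonneg hm 9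
  have hm10 : (0:ℤ) ≤ (n-8)^10 := pow_nonneg hm 10
  have hm11 : (0:ℤ) ≤ (n-8)^11 := pow_nonneg hm 11
  have hm12 : (0:ℤ) ≤ (n-8)^12 := pow_nonneg hm 12
  have hm13 : (0:ℤ) ≤ (n-8)^13 := pow_nonneg hm 13
  have hm14 : (0:ℤ) ≤ (n-8)^14 := pow_nonneg hm 14
  have hm15 : (0:ℤ) ≤ (n-8)^15 := pow_nonneg hm 15
  have hm16 : (0:ℤ) ≤ (n-8)^16 := pow_nonneg hm 16
  have hm17 : (0:ℤ) ≤ (n-8)^17 := pow_nonneg hm 17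
  have hm18 : (0:ℤ) ≤ (n-8)^18 := pow_nonneg hm 18
  have hm19 : (0:ℤ) ≤ (n-8)^19 := pow_nonneg hm 19
  linarith [hm,hm2,hm3,hm4,hm5,hm6,hm7,hm8,hm9,hm10,hm11,hm12,hm13,hm14,hm15,hm16,hm17,hm18,hm19]

private lemma posS1 (n : ℤ) (hn : 8 ≤ n) : 0 ≤ 676619196825600 + 1376354209628160*n + (-727929772572672)*n^2 + (-6706651757838336)*n^3 + (-17448369141915648)*n^4 + (-44257873049634816)*n^5 + (-72267367010245632)*n^6 + 3446005004089344*n^7 + 300767565515665536*n^8 + 741498119130413664*n^9 + 1041393986653251888*n^10 + 1001824112208702096*n^11 + 704997040022034336*n^12 + 373768008554264544*n^13 + 150503123396536128*n^14 + 45512452290198528*n^15 + 10002518080892928*n^16 + 1501232885858304*n^17 + 136722904252416*n^18 + 5662763384832*n^19 := by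
  have hm : (0:ℤ) ≤ n - 8 := by linarith
  have hm2 : (0:ℤ) ≤ (n-8)^2 := pow_nonneg hm 2
  have hm3 : (0:ℤ) ≤ (n-8)^3 := pow_nonneg hm 3
  have hm4 : (0:ℤ) ≤ (n-8)^4 := pow_nonneg hm 4
  have hm5 : (0:ℤ) ≤ (n-8)^5 := pow_nonneg hm 5
  have hm6 : (0:ℤ) ≤ (n-8)^6 := pow_nonneg hm 6
  have hm7 : (0:ℤ) ≤ (n-8)^7 := pow_nonneg hm 7
  have hm8 : (0:ℤ) ≤ (n-8)^8 := pow_nonneg hm 8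
  have hm9 : (0:ℤ) ≤ (n-8)^9 := pow_nonneg hm 9
  have hm10 : (0:ℤ) ≤ (n-8)^10 := pow_nonneg hm 10
  have hm11 : (0:ℤ) ≤ (n-8)^11 := pow_nonneg hm 11
  have hm12 : (0:ℤ) ≤ (n-8)^12 := pow_nonneg hm 12
  have hm13 : (0:ℤ) ≤ (n-8)^13 := pow_nonneg hm 13
  have hm14 : (0:ℤ) ≤ (n-8)^14 := pow_nonneg hm 14
  have hm15 : (0:ℤ) ≤ (n-8)^15 := pow_nonneg hm 15
  have hm16 : (0:ℤ) ≤ (n-8)^16 := pow_nonneg hm 16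
  have hm17 : (0:ℤ) ≤ (n-8)^17 := pow_nonneg hm 17
  have hm18 : (0:ℤ) ≤ (n-8)^18 := pow_nonneg hm 18
  have hm19 : (0:ℤ) ≤ (n-8)^19 := pow_nonneg hm 19
  linarith [hm,hm2,hm3,hm4,hm5,hm6,hm7,hm8,hm9,hm10,hm11,hm12,hm13,hm14,hm15,hm16,hm17,hm18,hm19]

private lemma posS2 (n : ℤ) (hn : 8 ≤ n) : 0 ≤ (-592041797222400) + (-1204309933424640)*n + (-2898722403827712)*n^2 + (-7558428537225216)*n^3 + (-4046329337665536)*n^4 + 30888938505733632*n^5 + 101291550246819072*n^6 + 195847719630133824*n^7 + 330512035092913440*n^8 + 509511850978268448*n^9 + 654830367727335408*n^10 + 663212849038100784*n^11 + 521043637542110928*n^12 + 315001583502977808*n^13 + 144387650666193120*n^14 + 48924358117562880*n^15 + 11785542784174080*n^16 + 1896218921041920*n^17 + 181642900930560*n^18 + 7797001420800*n^19 := by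
  have hm : (0:ℤ) ≤ n - 8 := by linarith
  have hm2 : (0:ℤ) ≤ (n-8)^2 := pow_nonneg hm 2
  have hm3 : (0:ℤ) ≤ (n-8)^3 := pow_nonneg hm 3
  have hm4 : (0:ℤ) ≤ (n-8)^4 := pow_nonneg hm 4
  have hm5 : (0:ℤ) ≤ (n-8)^5 := pow_nonneg hm 5
  have hm6 : (0:ℤ) ≤ (n-8)^6 := pow_nonneg hm 6
  have hm7 : (0:ℤ) ≤ (n-8)^7 := pow_nonneg hm 7
  have hm8 : (0:ℤ) ≤ (n-8)^8 := pow_nonneg hm 8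
  have hm9 : (0:ℤ) ≤ (n-8)^9 := pow_nonneg hm 9
  have hm10 : (0:ℤ) ≤ (n-8)^10 := pow_nonneg hm 10
  have hm11 : (0:ℤ) ≤ (n-8)^11 := pow_nonneg hm 11
  have hm12 : (0:ℤ) ≤ (n-8)^12 := pow_nonneg hm 12
  have hm13 : (0:ℤ) ≤ (n-8)^13 := pow_nonneg hm 13
  have hm14 : (0:ℤ) ≤ (n-8)^14 := pow_nonneg hm 14
  have hm15 : (0:ℤ) ≤ (n-8)^15 := pow_nonneg hm 15
  have hm16 : (0:ℤ) ≤ (n-8)^16 := pow_nonneg hm 16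
  have hm17 : (0:ℤ) ≤ (n-8)^17 := pow_nonneg hm 17
  have hm18 : (0:ℤ) ≤ (n-8)^18 := pow_nonneg hm 18
  have hm19 : (0:ℤ) ≤ (n-8)^19 := pow_nonneg hm 19
  linarith [hm,hm2,hm3,hm4,hm5,hm6,hm7,hm8,hm9,hm10,hm11,hm12,hm13,hm14,hm15,hm16,hm17,hm18,hm19]

private lemma posS3 (n : ℤ) (hn : 8 ≤ n) : 0 ≤ 230238476697600 + 468342751887360*n + 2502260195033088*n^2 + 8160902307661824*n^3 + 16226274378779136*n^4 + 31025212803930240*n^5 + 49288265198687808*n^6 + 31578189076450944*n^7 + (-60879013691694336)*n^8 + (-181243524242852064)*n^9 + (-216848269469402928)*n^10 + (-131220404493965136)*n^11 + (-12890988729033696)*n^12 + 45908674545751776*n^13 + 41990058218532672*n^14 + 19719258664614912*n^15 + 5711538964672512*n^16 + 1027059008864256*n^17 + 105467630321664*n^18 + 4733238509568*n^19 := by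
  have hm : (0:ℤ) ≤ n - 8 := by linarith
  have hm2 : (0:ℤ) ≤ (n-8)^2 := pow_nonneg hm 2
  have hm3 : (0:ℤ) ≤ (n-8)^3 := pow_nonneg hm 3
  have hm4 : (0:ℤ) ≤ (n-8)^4 := pow_nonneg hm 4
  have hm5 : (0:ℤ) ≤ (n-8)^5 := pow_nonneg hm 5
  have hm6 : (0:ℤ) ≤ (n-8)^6 := pow_nonneg hm 6
  have hm7 : (0:ℤ) ≤ (n-8)^7 := pow_nonneg hm 7
  have hm8 : (0:ℤ) ≤ (n-8)^8 := pow_nonneg hm 8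
  have hm9 : (0:ℤ) ≤ (n-8)^9 := pow_nonneg hm 9
  have hm10 : (0:ℤ) ≤ (n-8)^10 := pow_nonneg hm 10
  have hm11 : (0:ℤ) ≤ (n-8)^11 := pow_nonneg hm 11
  have hm12 : (0:ℤ) ≤ (n-8)^12 := pow_nonneg hm 12
  have hm13 : (0:ℤ) ≤ (n-8)^13 := pow_nonneg hm 13
  have hm14 : (0:ℤ) ≤ (n-8)^14 := pow_nonneg hm 14
  have hm15 : (0:ℤ) ≤ (n-8)^15 := pow_nonneg hm 15
  have hm16 : (0:ℤ) ≤ (n-8)^16 := pow_nonneg hm 16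
  have hm17 : (0:ℤ) ≤ (n-8)^17 := pow_nonneg hm 17
  have hm18 : (0:ℤ) ≤ (n-8)^18 := pow_nonneg hm 18
  have hm19 : (0:ℤ) ≤ (n-8)^19 := pow_nonneg hm 19
  linarith [hm,hm2,hm3,hm4,hm5,hm6,hm7,hm8,hm9,hm10,hm11,hm12,hm13,hm14,hm15,hm16,hm17,hm18,hm19]

private lemma posS4 (n : ℤ) (hn : 8 ≤ n) : 0 ≤ (-33576444518400) + (-68299984650240)*n + (-565430753889792)*n^2 + (-1951602295378176)*n^3 + (-5544701939331072)*n^4 + (-16632694552344192)*n^5 + (-38999829382444224)*n^6 + (-75915851303710656)*n^7 + (-136298911709119392)*n^8 + (-205395989582398752)*n^9 + (-229709556392635152)*n^10 + (-179565936505113456)*n^11 + (-93940800312322152)*n^12 + (-29627283703608936)*n^13 + (-3075500820063024)*n^14 + 1705378012229376*n^15 + 891512351640576*n^16 + 197493017591808*n^17 + 22459998339072*n^18 + 1067119017984*n^19 := by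
  have hm : (0:ℤ) ≤ n - 8 := by linarith
  have hm2 : (0:ℤ) ≤ (n-8)^2 := pow_nonneg hm 2
  have hm3 : (0:ℤ) ≤ (n-8)^3 := pow_nonneg hm 3
  have hm4 : (0:ℤ) ≤ (n-8)^4 := pow_nonneg hm 4
  have hm5 : (0:ℤ) ≤ (n-8)^5 := pow_nonneg hm 5
  have hm6 : (0:ℤ) ≤ (n-8)^6 := pow_nonneg hm 6
  have hm7 : (0:ℤ) ≤ (n-8)^7 := pow_nonneg hm 7
  have hm8 : (0:ℤ) ≤ (n-8)^8 := pow_nonneg hm 8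
  have hm9 : (0:ℤ) ≤ (n-8)^9 := pow_nonneg hm 9
  have hm10 : (0:ℤ) ≤ (n-8)^10 := pow_nonneg hm 10
  have hm11 : (0:ℤ) ≤ (n-8)^11 := pow_nonneg hm 11
  have hm12 : (0:ℤ) ≤ (n-8)^12 := pow_nonneg hm 12
  have hm13 : (0:ℤ) ≤ (n-8)^13 := pow_nonneg hm 13
  have hm14 : (0:ℤ) ≤ (n-8)^14 := pow_nonneg hm 14
  have hm15 : (0:ℤ) ≤ (n-8)^15 := pow_nonneg hm 15
  have hm16 : (0:ℤ) ≤ (n-8)^16 := pow_nonneg hm 16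
  have hm17 : (0:ℤ) ≤ (n-8)^17 := pow_nonneg hm 17
  have hm18 : (0:ℤ) ≤ (n-8)^18 := pow_nonneg hm 18
  have hm19 : (0:ℤ) ≤ (n-8)^19 := pow_nonneg hm 19
  linarith [hm,hm2,hm3,hm4,hm5,hm6,hm7,hm8,hm9,hm10,hm11,hm12,hm13,hm14,hm15,hm16,hm17,hm18,hm19]

private lemma posR0 (n : ℤ) (hn : 8 ≤ n) : 0 ≤ (-82944) + (-20736)*n + 173520*n^2 + 410688*n^3 + 364374*n^4 + 326304*n^5 + 221184*n^6 + 55296*n^7 := by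
  have hm : (0:ℤ) ≤ n - 8 := by linarith
  have hm2 : (0:ℤ) ≤ (n-8)^2 := pow_nonneg hm 2
  have hm3 : (0:ℤ) ≤ (n-8)^3 := pow_nonneg hm 3
  have hm4 : (0:ℤ) ≤ (n-8)^4 := pow_nonneg hm 4
  have hm5 : (0:ℤ) ≤ (n-8)^5 := pow_nonneg hm 5
  have hm6 : (0:ℤ) ≤ (n-8)^6 := pow_nonneg hm 6
  have hm7 : (0:ℤ) ≤ (n-8)^7 := pow_nonneg hm 7
  linarith [hm,hm2,hm3,hm4,hm5,hm6,hm7]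

private lemma posR1 (n : ℤ) (hn : 8 ≤ n) : 0 ≤ 96768 + 24192*n + 72300*n^2 + 171120*n^3 + 342060*n^4 + 594240*n^5 + 442368*n^6 + 110592*n^7 := by
  have hm : (0:ℤ) ≤ n - 8 := by linarith
  have hm2 : (0:ℤ) ≤ (n-8)^2 := pow_nonneg hm 2
  have hm3 : (0:ℤ) ≤ (n-8)^3 := pow_nonneg hm 3
  have hm4 : (0:ℤ) ≤ (n-8)^4 := pow_nonneg hm 4
  have hm5 : (0:ℤ) ≤ (n-8)^5 := pow_nonneg hm 5
  have hm6 : (0:ℤ) ≤ (n-8)^6 := pow_nonneg hm 6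
  have hm7 : (0:ℤ) ≤ (n-8)^7 := pow_nonneg hm 7
  linarith [hm,hm2,hm3,hm4,hm5,hm6,hm7]

private lemma posR2 (n : ℤ) (hn : 8 ≤ n) : 0 ≤ (-28224) + (-7056)*n + (-101220)*n^2 + (-239568)*n^3 + (-22314)*n^4 + 267936*n^5 + 221184*n^6 + 55296*n^7 := by
  have hm : (0:ℤ) ≤ n - 8 := by linarith
  have hm2 : (0:ℤ) ≤ (n-8)^2 := pow_nonneg hm 2
  have hm3 : (0:ℤ) ≤ (n-8)^3 := pow_nonneg hm 3
  have hm4 : (0:ℤ) ≤ (n-8)^4 := pow_nonneg hm 4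
  have hm5 : (0:ℤ) ≤ (n-8)^5 := pow_nonneg hm 5
  have hm6 : (0:ℤ) ≤ (n-8)^6 := pow_nonneg hm 6
  have hm7 : (0:ℤ) ≤ (n-8)^7 := pow_nonneg hm 7
  linarith [hm,hm2,hm3,hm4,hm5,hm6,hm7]

private lemma posQ (n : ℤ) (hn : 8 ≤ n) : 0 < 215*n^2 + 264*n^3 + 64*n^4 := by
  have hm : (0:ℤ) ≤ n - 8 := by linarith
  have hm2 : (0:ℤ) ≤ (n-8)^2 := pow_nonneg hm 2
  have hm3 : (0:ℤ) ≤ (n-8)^3 := pow_nonneg hm 3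
  have hm4 : (0:ℤ) ≤ (n-8)^4 := pow_nonneg hm 4
  linarith [hm,hm2,hm3,hm4]

private lemma posLO (n : ℤ) (hn : 8 ≤ n) : 0 < (-144) + 285*n^2 + 504*n^3 + 192*n^4 := by
  have hm : (0:ℤ) ≤ n - 8 := by linarith
  have hm2 : (0:ℤ) ≤ (n-8)^2 := pow_nonneg hm 2
  have hm3 : (0:ℤ) ≤ (n-8)^3 := pow_nonneg hm 3
  have hm4 : (0:ℤ) ≤ (n-8)^4 := pow_nonneg hm 4
  linarith [hm,hm2,hm3,hm4]

private lemma posHI (n : ℤ) (hn : 8 ≤ n) : 0 < 84 + 285*n^2 + 504*n^3 + 192*n^4 := by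
  have hm : (0:ℤ) ≤ n - 8 := by linarith
  have hm2 : (0:ℤ) ≤ (n-8)^2 := pow_nonneg hm 2
  have hm3 : (0:ℤ) ≤ (n-8)^3 := pow_nonneg hm 3
  have hm4 : (0:ℤ) ≤ (n-8)^4 := pow_nonneg hm 4
  linarith [hm,hm2,hm3,hm4]

private lemma step_bound (n A B C : ℤ) (hn : 8 ≤ n) (hA : 0 < A) (hB : 0 < B)
    (e2 : (n+4)*C = (2*n+5)*B + (3*n+3)*A)
    (hlo : ((-144) + 285*n^2 + 504*n^3 + 192*n^4)*A ≤ (215*n^2 + 264*n^3 + 64*n^4)*B) (hhi : (215*n^2 + 264*n^3 + 64*n^4)*B ≤ (84 + 285*n^2 + 504*n^3 + 192*n^4)*A) :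
    (837 + 2850*n + 2949*n^2 + 1272*n^3 + 192*n^4)*B ≤ (543 + 1478*n + 1391*n^2 + 520*n^3 + 64*n^4)*C ∧ (543 + 1478*n + 1391*n^2 + 520*n^3 + 64*n^4)*C ≤ (1065 + 2850*n + 2949*n^2 + 1272*n^3 + 192*n^4)*B := by
  have h4 : (0:ℤ) < n + 4 := by linarith
  have hK1 := posK1 n hn
  have hK2 := posK2 n hn
  have hLOp : (0:ℤ) < ((-144) + 285*n^2 + 504*n^3 + 192*n^4) := posLO n hn
  have hHIp : (0:ℤ) < (84 + 285*n^2 + 504*n^3 + 192*n^4) := posHI n hn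
  constructor
  · -- lower bound at n+1, uses hhi
    have key : (84 + 285*n^2 + 504*n^3 + 192*n^4)*(n+4)*((543 + 1478*n + 1391*n^2 + 520*n^3 + 64*n^4)*C - (837 + 2850*n + 2949*n^2 + 1272*n^3 + 192*n^4)*B)
        = (543 + 1478*n + 1391*n^2 + 520*n^3 + 64*n^4)*(3*n+3)*((84 + 285*n^2 + 504*n^3 + 192*n^4)*A - (215*n^2 + 264*n^3 + 64*n^4)*B) + ((-53172) + (-315924)*n + (-227910)*n^2 + 119664*n^3 + 131718*n^4 + 22272*n^5)*B := by
      linear_combination ((84 + 285*n^2 + 504*n^3 + 192*n^4)*(543 + 1478*n + 1391*n^2 + 520*n^3 + 64*n^4))*e2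
    have hrhs : 0 ≤ (84 + 285*n^2 + 504*n^3 + 192*n^4)*(n+4)*((543 + 1478*n + 1391*n^2 + 520*n^3 + 64*n^4)*C - (837 + 2850*n + 2949*n^2 + 1272*n^3 + 192*n^4)*B) := by
      rw [key]
      have t1 : 0 ≤ (543 + 1478*n + 1391*n^2 + 520*n^3 + 64*n^4)*(3*n+3)*((84 + 285*n^2 + 504*n^3 + 192*n^4)*A - (215*n^2 + 264*n^3 + 64*n^4)*B) := by
        apply mul_nonneg
        · apply mul_nonneg
          · nlinarith [(posQ (n+1) (by linarith)).le]
          · linarith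
        · linarith
      have t2 : 0 ≤ ((-53172) + (-315924)*n + (-227910)*n^2 + 119664*n^3 + 131718*n^4 + 22272*n^5)*B := mul_nonneg hK1 hB.le
      linarith
    nlinarith [hrhs, mul_pos hHIp h4]
  · -- upper bound at n+1, uses hlo
    have key : ((-144) + 285*n^2 + 504*n^3 + 192*n^4)*(n+4)*((1065 + 2850*n + 2949*n^2 + 1272*n^3 + 192*n^4)*B - (543 + 1478*n + 1391*n^2 + 520*n^3 + 64*n^4)*C)
        = (543 + 1478*n + 1391*n^2 + 520*n^3 + 64*n^4)*(3*n+3)*((215*n^2 + 264*n^3 + 64*n^4)*B - ((-144) + 285*n^2 + 504*n^3 + 192*n^4)*A) + ((-222480) + (-574416)*n + (-591750)*n^2 + (-200376)*n^3 + 3258*n^4 + 6912*n^5)*B := by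
      linear_combination (-(((-144) + 285*n^2 + 504*n^3 + 192*n^4)*(543 + 1478*n + 1391*n^2 + 520*n^3 + 64*n^4)))*e2
    have hrhs : 0 ≤ ((-144) + 285*n^2 + 504*n^3 + 192*n^4)*(n+4)*((1065 + 2850*n + 2949*n^2 + 1272*n^3 + 192*n^4)*B - (543 + 1478*n + 1391*n^2 + 520*n^3 + 64*n^4)*C) := by
      rw [key]
      have t1 : 0 ≤ (543 + 1478*n + 1391*n^2 + 520*n^3 + 64*n^4)*(3*n+3)*((215*n^2 + 264*n^3 + 64*n^4)*B - ((-144) + 285*n^2 + 504*n^3 + 192*n^4)*A) := by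
        apply mul_nonneg
        · apply mul_nonneg
          · nlinarith [(posQ (n+1) (by linarith)).le]
          · linarith
        · linarith
      have t2 : 0 ≤ ((-222480) + (-574416)*n + (-591750)*n^2 + (-200376)*n^3 + 3258*n^4 + 6912*n^5)*B := mul_nonneg hK2 hB.le
      linarith
    nlinarith [hrhs, mul_pos hLOp h4]

private lemma main_ineq (n A B C D E : ℤ) (hn : 8 ≤ n)
    (e2 : (n+4)*C = (2*n+5)*B + (3*n+3)*A)
    (e3 : (n+5)*D = (2*n+7)*C + (3*n+6)*B)
    (e4 : (n+6)*E = (2*n+9)*D + (3*n+9)*C)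
    (hlo : ((-144) + 285*n^2 + 504*n^3 + 192*n^4)*A ≤ (215*n^2 + 264*n^3 + 64*n^4)*B) (hhi : (215*n^2 + 264*n^3 + 64*n^4)*B ≤ (84 + 285*n^2 + 504*n^3 + 192*n^4)*A) :
    0 ≤ A*C - B^2 ∧ (B*D - C^2)^2 ≤ (A*C - B^2)*(C*E - D^2) := by
  have hu : (0:ℤ) ≤ ((215*n^2 + 264*n^3 + 64*n^4)*B - ((-144) + 285*n^2 + 504*n^3 + 192*n^4)*A) := by linarith
  have hv : (0:ℤ) ≤ ((84 + 285*n^2 + 504*n^3 + 192*n^4)*A - (215*n^2 + 264*n^3 + 64*n^4)*B) := by linarith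
  have h4 : (0:ℤ) < n + 4 := by linarith
  have h5 : (0:ℤ) < n + 5 := by linarith
  have h6 : (0:ℤ) < n + 6 := by linarith
  have hq : (0:ℤ) < (215*n^2 + 264*n^3 + 64*n^4) := posQ n hn
  have f0 : (n+4)*(A*C - B^2) = (3 + 3*n)*A^2 + (5 + 2*n)*A*B + ((-4) + (-1)*n)*B^2 := by linear_combination A*e2
  have f1 : (n+4)^2*(n+5)*(B*D - C^2) = ((-45) + (-99)*n + (-63)*n^2 + (-9)*n^3)*A^2 + ((-66) + (-111)*n + (-51)*n^2 + (-6)*n^3)*A*B + (111 + 102*n + 30*n^2 + 3*n^3)*B^2 := by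
    linear_combination ((16 + 8*n + 1*n^2)*B)*e3 + (((-20) + (-9)*n + (-1)*n^2)*C + (3)*B + ((-15) + (-18)*n + (-3)*n^2)*A)*e2
  have f2 : (n+4)^2*(n+5)^2*(n+6)*(C*E - D^2) = (2214 + 5967*n + 5643*n^2 + 2268*n^3 + 405*n^4 + 27*n^5)*A^2 + (4572 + 9180*n + 6309*n^2 + 1980*n^3 + 297*n^4 + 18*n^5)*A*B + ((-1986) + (-4227)*n + (-3144)*n^2 + (-1056)*n^3 + (-162)*n^4 + (-9)*n^5)*B^2 := by
    linear_combination ((400 + 360*n + 121*n^2 + 18*n^3 + 1*n^4)*C)*e4 + (((-480) + (-416)*n + (-134)*n^2 + (-19)*n^3 + (-1)*n^4)*D + (48 + 24*n + 3*n^2)*C + ((-576) + (-672)*n + (-276)*n^2 + (-48)*n^3 + (-3)*n^4)*B)*e3 + ((984 + 930*n + 327*n^2 + 51*n^3 + 3*n^4)*C + (294 + 189*n + 30*n^2)*B + (738 + 1251*n + 630*n^2 + 126*n^3 + 9*n^4)*A)*e2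
  constructor
  · -- 0 ≤ A*C - B^2
    have hR : 0 ≤ ((-82944) + (-20736)*n + 173520*n^2 + 410688*n^3 + 364374*n^4 + 326304*n^5 + 221184*n^6 + 55296*n^7)*((84 + 285*n^2 + 504*n^3 + 192*n^4)*A - (215*n^2 + 264*n^3 + 64*n^4)*B)^2 + (96768 + 24192*n + 72300*n^2 + 171120*n^3 + 342060*n^4 + 594240*n^5 + 442368*n^6 + 110592*n^7)*((215*n^2 + 264*n^3 + 64*n^4)*B - ((-144) + 285*n^2 + 504*n^3 + 192*n^4)*A)*((84 + 285*n^2 + 504*n^3 + 192*n^4)*A - (215*n^2 + 264*n^3 + 64*n^4)*B) + ((-28224) + (-7056)*n + (-101220)*n^2 + (-239568)*n^3 + (-22314)*n^4 + 267936*n^5 + 221184*n^6 + 55296*n^7)*((215*n^2 + 264*n^3 + 64*n^4)*B - ((-144) + 285*n^2 + 504*n^3 + 192*n^4)*A)^2 := by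
      nlinarith [mul_nonneg (posR0 n hn) (pow_nonneg hv 2), mul_nonneg (mul_nonneg (posR1 n hn) hu) hv, mul_nonneg (posR2 n hn) (pow_nonneg hu 2)]
    have heq : (228^2*(215*n^2 + 264*n^3 + 64*n^4)^2) * ((n+4)*(A*C - B^2)) = ((-82944) + (-20736)*n + 173520*n^2 + 410688*n^3 + 364374*n^4 + 326304*n^5 + 221184*n^6 + 55296*n^7)*((84 + 285*n^2 + 504*n^3 + 192*n^4)*A - (215*n^2 + 264*n^3 + 64*n^4)*B)^2 + (96768 + 24192*n + 72300*n^2 + 171120*n^3 + 342060*n^4 + 594240*n^5 + 442368*n^6 + 110592*n^7)*((215*n^2 + 264*n^3 + 64*n^4)*B - ((-144) + 285*n^2 + 504*n^3 + 192*n^4)*A)*((84 + 285*n^2 + 504*n^3 + 192*n^4)*A - (215*n^2 + 264*n^3 + 64*n^4)*B) + ((-28224) + (-7056)*n + (-101220)*n^2 + (-239568)*n^3 + (-22314)*n^4 + 267936*n^5 + 221184*n^6 + 55296*n^7)*((215*n^2 + 264*n^3 + 64*n^4)*B - ((-144) + 285*n^2 + 504*n^3 + 192*n^4)*A)^2 :=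 by
      rw [f0]; ring
    have h3 : 0 ≤ (228^2*(215*n^2 + 264*n^3 + 64*n^4)^2*(n+4)) * (A*C - B^2) := by
      calc (0:ℤ) ≤ ((-82944) + (-20736)*n + 173520*n^2 + 410688*n^3 + 364374*n^4 + 326304*n^5 + 221184*n^6 + 55296*n^7)*((84 + 285*n^2 + 504*n^3 + 192*n^4)*A - (215*n^2 + 264*n^3 + 64*n^4)*B)^2 + (96768 + 24192*n + 72300*n^2 + 171120*n^3 + 342060*n^4 + 594240*n^5 + 442368*n^6 + 110592*n^7)*((215*n^2 + 264*n^3 + 64*n^4)*B - ((-144) + 285*n^2 + 504*n^3 + 192*n^4)*A)*((84 + 285*n^2 + 504*n^3 + 192*n^4)*A - (215*n^2 + 264*n^3 + 64*n^4)*B) + ((-28224) + (-7056)*n + (-101220)*n^2 + (-239568)*n^3 + (-22314)*n^4 + 267936*n^5 + 221184*n^6 + 55296*n^7)*((215*n^2 + 264*n^3 + 64*n^4)*B - ((-144) + 285*n^2 + 504*n^3 + 192*n^4)*A)^2 := hR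
        _ = (228^2*(215*n^2 + 264*n^3 + 64*n^4)^2*(n+4)) * (A*C - B^2) := by rw [← heq]; ring
    exact (mul_nonneg_iff_of_pos_left (mul_pos (mul_pos (by norm_num : (0:ℤ) < 228^2) (pow_pos hq 2)) h4)).mp h3
  · have hS : 0 ≤ ((-289979655782400) + (-589866089840640)*n + 2043722206937088*n^2 + 9450646096379904*n^3 + 7942653778821120*n^4 + (-27560335053348864)*n^5 + (-85277421781069824)*n^6 + (-84907933670163456)*n^7 + 45675428440177152*n^8 + 256138733491691904*n^9 + 399424905849148704*n^10 + 386956795181749632*n^11 + 265003214063211864*n^12 + 134302383300647448*n^13 + 51181031768938704*n^14 + 14601974825021184*n^15 + 3037001909750784*n^16 + 434579956088832*n^17 + 38087635304448*n^18 + 1531881455616*n^19)*((84 + 285*n^2 + 504*n^3 + 192*n^4)*A - (215*n^2 + 264*n^3 + 64*n^4)*B)^4 + (676619196825600 + 1376354209628160*n + (-727929772572672)*n^2 + (-6706651757838336)*n^3 + (-17448369141915648)*n^4 + (-44257873049634816)*n^5 + (-72267367010245632)*n^6 + 3446005004089344*n^7 + 300767565515665536*n^8 + 741498119130413664*n^9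 + 1041393986653251888*n^10 + 1001824112208702096*n^11 + 704997040022034336*n^12 + 373768008554264544*n^13 + 150503123396536128*n^14 + 45512452290198528*n^15 + 10002518080892928*n^16 + 1501232885858304*n^17 + 136722904252416*n^18 + 5662763384832*n^19)*((215*n^2 + 264*n^3 + 64*n^4)*B - ((-144) + 285*n^2 + 504*n^3 + 192*n^4)*A)*((84 + 285*n^2 + 504*n^3 + 192*n^4)*A - (215*n^2 + 264*n^3 + 64*n^4)*B)^3 + ((-592041797222400) + (-1204309933424640)*n + (-2898722403827712)*n^2 + (-7558428537225216)*n^3 + (-4046329337665536)*n^4 + 30888938505733632*n^5 + 101291550246819072*n^6 + 195847719630133824*n^7 + 330512035092913440*n^8 + 509511850978268448*n^9 + 654830367727335408*n^10 + 663212849038100784*n^11 + 521043637542110928*n^12 + 315001583502977808*n^13 + 144387650666193120*n^14 + 48924358117562880*n^15 + 11785542784174080*n^16 + 1896218921041920*n^17 + 181642900930560*n^18 + 7797001420800*n^19)*((215*n^2 + 264*n^3 + 64*n^4)*B - ((-144) + 285*n^2 + 504*n^3 + 192*n^4)*A)^2*((84 + 285*n^2 + 504*n^3 + 192*n^4)*A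 - (215*n^2 + 264*n^3 + 64*n^4)*B)^2 + (230238476697600 + 468342751887360*n + 2502260195033088*n^2 + 8160902307661824*n^3 + 16226274378779136*n^4 + 31025212803930240*n^5 + 49288265198687808*n^6 + 31578189076450944*n^7 + (-60879013691694336)*n^8 + (-181243524242852064)*n^9 + (-216848269469402928)*n^10 + (-131220404493965136)*n^11 + (-12890988729033696)*n^12 + 45908674545751776*n^13 + 41990058218532672*n^14 + 19719258664614912*n^15 + 5711538964672512*n^16 + 1027059008864256*n^17 + 105467630321664*n^18 + 4733238509568*n^19)*((215*n^2 + 264*n^3 + 64*n^4)*B - ((-144) + 285*n^2 + 504*n^3 + 192*n^4)*A)^3*((84 + 285*n^2 + 504*n^3 + 192*n^4)*A - (215*n^2 + 264*n^3 + 64*n^4)*B) + ((-33576444518400) + (-68299984650240)*n + (-565430753889792)*n^2 + (-1951602295378176)*n^3 + (-5544701939331072)*n^4 + (-16632694552344192)*n^5 + (-38999829382444224)*n^6 + (-75915851303710656)*n^7 + (-136298911709119392)*n^8 + (-205395989582398752)*n^9 + (-229709556392635152)*n^10 + (-179565936505113456)*n^11 + (-93940800312322152)*n^12 + (-29627283703608936)*n^13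 + (-3075500820063024)*n^14 + 1705378012229376*n^15 + 891512351640576*n^16 + 197493017591808*n^17 + 22459998339072*n^18 + 1067119017984*n^19)*((215*n^2 + 264*n^3 + 64*n^4)*B - ((-144) + 285*n^2 + 504*n^3 + 192*n^4)*A)^4 := by
      nlinarith [mul_nonneg (posS0 n hn) (pow_nonneg hv 4),
        mul_nonneg (mul_nonneg (posS1 n hn) hu) (pow_nonneg hv 3),
        mul_nonneg (mul_nonneg (posS2 n hn) (pow_nonneg hu 2)) (pow_nonneg hv 2),
        mul_nonneg (mul_nonneg (posS3 n hn) (pow_nonneg hu 3)) hv,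
        mul_nonneg (posS4 n hn) (pow_nonneg hu 4)]
    have keyA : (n+4)^6*(n+5)^2*(n+6)*((A*C-B^2)*(C*E-D^2)-(B*D-C^2)^2)
        = (n+4)^3*((3 + 3*n)*A^2 + (5 + 2*n)*A*B + ((-4) + (-1)*n)*B^2)*((2214 + 5967*n + 5643*n^2 + 2268*n^3 + 405*n^4 + 27*n^5)*A^2 + (4572 + 9180*n + 6309*n^2 + 1980*n^3 + 297*n^4 + 18*n^5)*A*B + ((-1986) + (-4227)*n + (-3144)*n^2 + (-1056)*n^3 + (-162)*n^4 + (-9)*n^5)*B^2) - (n+4)^2*(n+6)*(((-45) + (-99)*n + (-63)*n^2 + (-9)*n^3)*A^2 + ((-66) + (-111)*n + (-51)*n^2 + (-6)*n^3)*A*B + (111 + 102*n + 30*n^2 + 3*n^3)*B^2)^2 := by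
      linear_combination ((n+4)^3*((n+4)^2*(n+5)^2*(n+6)*(C*E-D^2)))*f0 + ((n+4)^3*((3 + 3*n)*A^2 + (5 + 2*n)*A*B + ((-4) + (-1)*n)*B^2))*f2 - ((n+4)^2*(n+6)*((n+4)^2*(n+5)*(B*D-C^2)+(((-45) + (-99)*n + (-63)*n^2 + (-9)*n^3)*A^2 + ((-66) + (-111)*n + (-51)*n^2 + (-6)*n^3)*A*B + (111 + 102*n + 30*n^2 + 3*n^3)*B^2)))*f1
    have keyB : (228:ℤ)^4*(215*n^2 + 264*n^3 + 64*n^4)^4*((n+4)^3*((3 + 3*n)*A^2 + (5 + 2*n)*A*B + ((-4) + (-1)*n)*B^2)*((2214 + 5967*n + 5643*n^2 + 2268*n^3 + 405*n^4 + 27*n^5)*A^2 + (4572 + 9180*n + 6309*n^2 + 1980*n^3 + 297*n^4 + 18*n^5)*A*B + ((-1986) + (-4227)*n + (-3144)*n^2 + (-1056)*n^3 + (-162)*n^4 + (-9)*n^5)*B^2) - (n+4)^2*(n+6)*(((-45) + (-99)*n + (-63)*n^2 + (-9)*n^3)*A^2 + ((-66) + (-111)*n + (-51)*n^2 + (-6)*n^3)*A*B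 + (111 + 102*n + 30*n^2 + 3*n^3)*B^2)^2)
        = ((-289979655782400) + (-589866089840640)*n + 2043722206937088*n^2 + 9450646096379904*n^3 + 7942653778821120*n^4 + (-27560335053348864)*n^5 + (-85277421781069824)*n^6 + (-84907933670163456)*n^7 + 45675428440177152*n^8 + 256138733491691904*n^9 + 399424905849148704*n^10 + 386956795181749632*n^11 + 265003214063211864*n^12 + 134302383300647448*n^13 + 51181031768938704*n^14 + 14601974825021184*n^15 + 3037001909750784*n^16 + 434579956088832*n^17 + 38087635304448*n^18 + 1531881455616*n^19)*((84 + 285*n^2 + 504*n^3 + 192*n^4)*A - (215*n^2 + 264*n^3 + 64*n^4)*B)^4 + (676619196825600 + 1376354209628160*n + (-727929772572672)*n^2 + (-6706651757838336)*n^3 + (-17448369141915648)*n^4 + (-44257873049634816)*n^5 + (-72267367010245632)*n^6 + 3446005004089344*n^7 + 300767565515665536*n^8 + 741498119130413664*n^9 + 1041393986653251888*n^10 + 1001824112208702096*n^11 + 704997040022034336*n^12 + 373768008554264544*n^13 + 150503123396536128*n^14 + 45512452290198528*n^15 + 10002518080892928*n^16 + 1501232885858304*n^17 + 136722904252416*n^18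 + 5662763384832*n^19)*((215*n^2 + 264*n^3 + 64*n^4)*B - ((-144) + 285*n^2 + 504*n^3 + 192*n^4)*A)*((84 + 285*n^2 + 504*n^3 + 192*n^4)*A - (215*n^2 + 264*n^3 + 64*n^4)*B)^3 + ((-592041797222400) + (-1204309933424640)*n + (-2898722403827712)*n^2 + (-7558428537225216)*n^3 + (-4046329337665536)*n^4 + 30888938505733632*n^5 + 101291550246819072*n^6 + 195847719630133824*n^7 + 330512035092913440*n^8 + 509511850978268448*n^9 + 654830367727335408*n^10 + 663212849038100784*n^11 + 521043637542110928*n^12 + 315001583502977808*n^13 + 144387650666193120*n^14 + 48924358117562880*n^15 + 11785542784174080*n^16 + 1896218921041920*n^17 + 181642900930560*n^18 + 7797001420800*n^19)*((215*n^2 + 264*n^3 + 64*n^4)*B - ((-144) + 285*n^2 + 504*n^3 + 192*n^4)*A)^2*((84 + 285*n^2 + 504*n^3 + 192*n^4)*A - (215*n^2 + 264*n^3 + 64*n^4)*B)^2 + (230238476697600 + 468342751887360*n + 2502260195033088*n^2 + 8160902307661824*n^3 + 16226274378779136*n^4 + 31025212803930240*n^5 + 49288265198687808*n^6 + 31578189076450944*n^7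 + (-60879013691694336)*n^8 + (-181243524242852064)*n^9 + (-216848269469402928)*n^10 + (-131220404493965136)*n^11 + (-12890988729033696)*n^12 + 45908674545751776*n^13 + 41990058218532672*n^14 + 19719258664614912*n^15 + 5711538964672512*n^16 + 1027059008864256*n^17 + 105467630321664*n^18 + 4733238509568*n^19)*((215*n^2 + 264*n^3 + 64*n^4)*B - ((-144) + 285*n^2 + 504*n^3 + 192*n^4)*A)^3*((84 + 285*n^2 + 504*n^3 + 192*n^4)*A - (215*n^2 + 264*n^3 + 64*n^4)*B) + ((-33576444518400) + (-68299984650240)*n + (-565430753889792)*n^2 + (-1951602295378176)*n^3 + (-5544701939331072)*n^4 + (-16632694552344192)*n^5 + (-38999829382444224)*n^6 + (-75915851303710656)*n^7 + (-136298911709119392)*n^8 + (-205395989582398752)*n^9 + (-229709556392635152)*n^10 + (-179565936505113456)*n^11 + (-93940800312322152)*n^12 + (-29627283703608936)*n^13 + (-3075500820063024)*n^14 + 1705378012229376*n^15 + 891512351640576*n^16 + 197493017591808*n^17 + 22459998339072*n^18 + 1067119017984*n^19)*((215*n^2 + 264*n^3 + 64*n^4)*B - ((-144) + 285*n^2 +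 504*n^3 + 192*n^4)*A)^4 := by ring
    have h3 : 0 ≤ (228^4*(215*n^2 + 264*n^3 + 64*n^4)^4*(n+4)^6*(n+5)^2*(n+6)) * ((A*C-B^2)*(C*E-D^2)-(B*D-C^2)^2) := by
      calc (0:ℤ) ≤ ((-289979655782400) + (-589866089840640)*n + 2043722206937088*n^2 + 9450646096379904*n^3 + 7942653778821120*n^4 + (-27560335053348864)*n^5 + (-85277421781069824)*n^6 + (-84907933670163456)*n^7 + 45675428440177152*n^8 + 256138733491691904*n^9 + 399424905849148704*n^10 + 386956795181749632*n^11 + 265003214063211864*n^12 + 134302383300647448*n^13 + 51181031768938704*n^14 + 14601974825021184*n^15 + 3037001909750784*n^16 + 434579956088832*n^17 + 38087635304448*n^18 + 1531881455616*n^19)*((84 + 285*n^2 + 504*n^3 + 192*n^4)*A - (215*n^2 + 264*n^3 + 64*n^4)*B)^4 + (676619196825600 + 1376354209628160*n + (-727929772572672)*n^2 + (-6706651757838336)*n^3 + (-17448369141915648)*n^4 + (-44257873049634816)*n^5 + (-72267367010245632)*n^6 + 3446005004089344*n^7 + 300767565515665536*n^8 + 741498119130413664*n^9 + 1041393986653251888*n^10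 + 1001824112208702096*n^11 + 704997040022034336*n^12 + 373768008554264544*n^13 + 150503123396536128*n^14 + 45512452290198528*n^15 + 10002518080892928*n^16 + 1501232885858304*n^17 + 136722904252416*n^18 + 5662763384832*n^19)*((215*n^2 + 264*n^3 + 64*n^4)*B - ((-144) + 285*n^2 + 504*n^3 + 192*n^4)*A)*((84 + 285*n^2 + 504*n^3 + 192*n^4)*A - (215*n^2 + 264*n^3 + 64*n^4)*B)^3 + ((-592041797222400) + (-1204309933424640)*n + (-2898722403827712)*n^2 + (-7558428537225216)*n^3 + (-4046329337665536)*n^4 + 30888938505733632*n^5 + 101291550246819072*n^6 + 195847719630133824*n^7 + 330512035092913440*n^8 + 509511850978268448*n^9 + 654830367727335408*n^10 + 663212849038100784*n^11 + 521043637542110928*n^12 + 315001583502977808*n^13 + 144387650666193120*n^14 + 48924358117562880*n^15 + 11785542784174080*n^16 + 1896218921041920*n^17 + 181642900930560*n^18 + 7797001420800*n^19)*((215*n^2 + 264*n^3 + 64*n^4)*B - ((-144) + 285*n^2 + 504*n^3 + 192*n^4)*A)^2*((84 + 285*n^2 + 504*n^3 + 192*n^4)*A - (215*n^2 + 264*n^3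 + 64*n^4)*B)^2 + (230238476697600 + 468342751887360*n + 2502260195033088*n^2 + 8160902307661824*n^3 + 16226274378779136*n^4 + 31025212803930240*n^5 + 49288265198687808*n^6 + 31578189076450944*n^7 + (-60879013691694336)*n^8 + (-181243524242852064)*n^9 + (-216848269469402928)*n^10 + (-131220404493965136)*n^11 + (-12890988729033696)*n^12 + 45908674545751776*n^13 + 41990058218532672*n^14 + 19719258664614912*n^15 + 5711538964672512*n^16 + 1027059008864256*n^17 + 105467630321664*n^18 + 4733238509568*n^19)*((215*n^2 + 264*n^3 + 64*n^4)*B - ((-144) + 285*n^2 + 504*n^3 + 192*n^4)*A)^3*((84 + 285*n^2 + 504*n^3 + 192*n^4)*A - (215*n^2 + 264*n^3 + 64*n^4)*B) + ((-33576444518400) + (-68299984650240)*n + (-565430753889792)*n^2 + (-1951602295378176)*n^3 + (-5544701939331072)*n^4 + (-16632694552344192)*n^5 + (-38999829382444224)*n^6 + (-75915851303710656)*n^7 + (-136298911709119392)*n^8 + (-205395989582398752)*n^9 + (-229709556392635152)*n^10 + (-179565936505113456)*n^11 + (-93940800312322152)*n^12 + (-29627283703608936)*n^13 + (-3075500820063024)*n^14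 + 1705378012229376*n^15 + 891512351640576*n^16 + 197493017591808*n^17 + 22459998339072*n^18 + 1067119017984*n^19)*((215*n^2 + 264*n^3 + 64*n^4)*B - ((-144) + 285*n^2 + 504*n^3 + 192*n^4)*A)^4 := hS
        _ = (228^4*(215*n^2 + 264*n^3 + 64*n^4)^4*(n+4)^6*(n+5)^2*(n+6)) * ((A*C-B^2)*(C*E-D^2)-(B*D-C^2)^2) := by
            rw [← keyB]; linear_combination (228:ℤ)^4*(215*n^2 + 264*n^3 + 64*n^4)^4*keyA.symm
    have := (mul_nonneg_iff_of_pos_left (mul_pos (mul_pos (mul_pos (mul_pos (by norm_num : (0:ℤ) < 228^4) (pow_pos hq 4)) (pow_pos h4 6)) (pow_pos h5 2)) h6)).mp h3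
    linarith

theorem stmt_13 (M : ℕ → ℤ) (hM0 : M 0 = 1) (hM1 : M 1 = 1)
    (hrec : ∀ n : ℕ, 2 ≤ n →
      ((n : ℤ) + 2) * M n = (2 * (n : ℤ) + 1) * M (n - 1) + (3 * (n : ℤ) - 3) * M (n - 2))
    (L : ℕ → ℤ) (hL : ∀ n, L n = M n * M (n + 2) - (M (n + 1)) ^ 2) :
    (∀ n : ℕ, 6 ≤ n → 0 ≤ L n ∧ L n * L (n + 2) ≥ (L (n + 1)) ^ 2) ∧
    (∃ n : ℕ, n < 6 ∧ L n * L (n + 2) < (L (n + 1)) ^ 2) := by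
  have e : ∀ k : ℕ, ((k:ℤ)+4) * M (k+2) = (2*(k:ℤ)+5) * M (k+1) + (3*(k:ℤ)+3) * M k := by
    intro k
    have h := hrec (k+2) (by omega)
    have i1 : k+2-1 = k+1 := by omega
    have i2 : k+2-2 = k := by omega
    rw [i1, i2] at h
    push_cast at h
    linear_combination h
  have hMpos : ∀ k : ℕ, 0 < M k := by
    intro k
    induction k using Nat.strong_induction_on with
    | _ k ih =>
      match k, ih with
      | 0, _ => rw [hM0]; norm_num
      | 1, _ => rw [hM1]; norm_num
      | (k+2), ih =>
        have h := e k
        have p0 := ih k (by omega)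
        have p1 := ih (k+1) (by omega)
        have hk4 : (0:ℤ) < (k:ℤ)+4 := by positivity
        have hpos : 0 < ((k:ℤ)+4) * M (k+2) := by
          nlinarith [mul_pos (show (0:ℤ) < 2*(k:ℤ)+5 by positivity) p1,
            mul_pos (show (0:ℤ) < 3*(k:ℤ)+3 by positivity) p0]
        nlinarith [hpos, hk4]
  have m2 : M 2 = 2 := by
    have h := hrec 2 (by omega)
    norm_num [hM0, hM1] at h
    omega
  have m3 : M 3 = 4 := by
    have h := hrec 3 (by omega)
    norm_num [hM1, m2] at h
    omega
  have m4 : M 4 = 9 := by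
    have h := hrec 4 (by omega)
    norm_num [m2, m3] at h
    omega
  have m5 : M 5 = 21 := by
    have h := hrec 5 (by omega)
    norm_num [m3, m4] at h
    omega
  have m6 : M 6 = 51 := by
    have h := hrec 6 (by omega)
    norm_num [m4, m5] at h
    omega
  have m7 : M 7 = 127 := by
    have h := hrec 7 (by omega)
    norm_num [m5, m6] at h
    omega
  have m8 : M 8 = 323 := by
    have h := hrec 8 (by omega)
    norm_num [m6, m7] at h
    omega
  have m9 : M 9 = 835 := by
    have h := hrec 9 (by omega)
    norm_num [m7, m8] at h
    omega
  have m10 : M 10 = 2188 := by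
    have h := hrec 10 (by omega)
    norm_num [m8, m9] at h
    omega
  have m11 : M 11 = 5798 := by
    have h := hrec 11 (by omega)
    norm_num [m9, m10] at h
    omega
  have l1 : L 1 = 0 := by
    have h := hL 1
    norm_num [hM1, m2, m3] at h
    omega
  have l2 : L 2 = 2 := by
    have h := hL 2
    norm_num [m2, m3, m4] at h
    omega
  have l3 : L 3 = 3 := by
    have h := hL 3
    norm_num [m3, m4, m5] at h
    omega
  have l6 : L 6 = 344 := by
    have h := hL 6
    norm_num [m6, m7, m8] at h
    omega
  have l7 : L 7 = 1716 := by
    have h := hL 7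
    norm_num [m7, m8, m9] at h
    omega
  have l8 : L 8 = 9499 := by
    have h := hL 8
    norm_num [m8, m9, m10] at h
    omega
  have l9 : L 9 = 53986 := by
    have h := hL 9
    norm_num [m9, m10, m11] at h
    omega
  have hb : ∀ k : ℕ, 8 ≤ k →
      ((-144) + 285*(k : ℤ)^2 + 504*(k : ℤ)^3 + 192*(k : ℤ)^4) * M k ≤ (215*(k : ℤ)^2 + 264*(k : ℤ)^3 + 64*(k : ℤ)^4) * M (k+1) ∧ (215*(k : ℤ)^2 + 264*(k : ℤ)^3 + 64*(k : ℤ)^4) * M (k+1) ≤ (84 + 285*(k : ℤ)^2 + 504*(k : ℤ)^3 + 192*(k : ℤ)^4) * M k := by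
    intro k hk
    induction k, hk using Nat.le_induction with
    | base => norm_num [m8, m9]
    | succ n hn ih =>
      have h := step_bound (n:ℤ) (M n) (M (n+1)) (M (n+2)) (by exact_mod_cast hn)
        (hMpos n) (hMpos (n+1)) (e n) ih.1 ih.2
      have i1 : n+1+1 = n+2 := by omega
      constructor
      · rw [i1]; push_cast; linarith [h.1]
      · rw [i1]; push_cast; linarith [h.2]
  constructor
  · intro n hn
    by_cases hn8 : 8 ≤ n
    case neg =>
      have h67 : n = 6 ∨ n = 7 := by omega
      rcases h67 with rfl | rfl
      · exact ⟨by rw [l6]; norm_num, by norm_num [l6, l7, l8]⟩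
      · exact ⟨by rw [l7]; norm_num, by norm_num [l7, l8, l9]⟩
    case pos =>
      obtain ⟨hb1, hb2⟩ := hb n hn8
      have e3 : ((n:ℤ)+5) * M (n+3) = (2*(n:ℤ)+7)*M (n+2) + (3*(n:ℤ)+6)*M (n+1) := by
        have h := e (n+1)
        have i1 : n+1+2 = n+3 := by omega
        have i2 : n+1+1 = n+2 := by omega
        rw [i1, i2] at h
        push_cast at h
        linear_combination h
      have e4 : ((n:ℤ)+6) * M (n+4) = (2*(n:ℤ)+9)*M (n+3) + (3*(n:ℤ)+9)*M (n+2) := by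
        have h := e (n+2)
        have i1 : n+2+2 = n+4 := by omega
        have i2 : n+2+1 = n+3 := by omega
        rw [i1, i2] at h
        push_cast at h
        linear_combination h
      have h := main_ineq (n:ℤ) (M n) (M (n+1)) (M (n+2)) (M (n+3)) (M (n+4))
        (by exact_mod_cast hn8) (e n) e3 e4 hb1 hb2
      have i1 : n+1+2 = n+3 := by omega
      have i2 : n+1+1 = n+2 := by omega
      have i3 : n+2+2 = n+4 := by omega
      have i4 : n+2+1 = n+3 := by omega
      constructor
      · rw [hL n]; exact h.1
      · rw [ge_iff_le, hL n, hL (n+1), hL (n+2), i1, i2, i3, i4]; exact h.2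
  · refine ⟨1, by norm_num, ?_⟩
    norm_num [l1, l2, l3]
end

section
/- Let $M_n$ denote the Motzkin numbers. Then $\lim_{n\to\infty} n^2\left(\frac{M_n M_{n+2}}{M_{n+1}^2} - 1\right) = \frac{3}{2}$. -/
set_option maxHeartbeats 1000000

noncomputable def mg (x : ℝ) : ℝ := 3 - 9/(2*x) + 207/(16*x^2)

lemma mg_eq (x : ℝ) (hx : x ≠ 0) : mg x = (48*x^2 - 72*x + 207)/(16*x^2) := by
  rw [mg]; field_simp; ring

lemma motz_step (x tn tn1 : ℝ) (hx : 50 ≤ x)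
    (htlb : 8/3 ≤ tn) (htub : tn ≤ 3)
    (hrec : (x+4) * (tn1 * tn) = (2*x+5) * tn + (3*x+3))
    (h : |tn - mg x| ≤ 102400/x^3) :
    |tn1 - mg (x+1)| ≤ 102400/(x+1)^3 := by
  have hx0 : (0:ℝ) < x := by linarith
  have hx1 : x ≠ 0 := ne_of_gt hx0
  have hx1' : x + 1 ≠ 0 := by positivity
  have htn0 : (0:ℝ) < tn := by linarith
  have hq : (0:ℝ) < 48*x^2 - 72*x + 207 := by nlinarith [sq_nonneg (x-1)]
  have hq' : (0:ℝ) < 48*(x+1)^2 - 72*(x+1) + 207 := by nlinarith [sq_nonneg x]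
  have e : mg x = (48*x^2 - 72*x + 207)/(16*x^2) := mg_eq x hx1
  have e' : mg (x+1) = (48*(x+1)^2 - 72*(x+1) + 207)/(16*(x+1)^2) := mg_eq _ hx1'
  have hg_lb : 8/3 ≤ mg x := by
    rw [e, le_div_iff₀ (by positivity)]; nlinarith
  have hg_ub : mg x ≤ 3 := by
    rw [e, div_le_iff₀ (by positivity)]; nlinarith
  have hg0 : (0:ℝ) < mg x := by linarith
  have htn1 : tn1 = ((2*x+5)*tn + (3*x+3))/((x+4)*tn) := by
    rw [eq_div_iff (by positivity)]; linarith [hrec]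
  have dec : tn1 - mg (x+1) = (3*x+3)*(mg x - tn)/((x+4)*tn*(mg x))
      + (-39168*x^2+28935*x-134964)/(16*(x+1)^2*(x+4)*(48*x^2-72*x+207)) := by
    have h4 : (x:ℝ)+4 ≠ 0 := by positivity
    have htn' : tn ≠ 0 := ne_of_gt htn0
    have hq1 : (48*x^2 - 72*x + 207) ≠ 0 := ne_of_gt hq
    rw [htn1, e', e]
    generalize hA : 48*x^2 - 72*x + 207 = A at *
    field_simp
    subst hA
    ring
  have hc : (3*x+3)/((x+4)*tn*(mg x)) ≤ 27/64 := by
    rw [div_le_iff₀ (by positivity)]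
    nlinarith [mul_le_mul htlb hg_lb (by norm_num) (by linarith)]
  have hA : |(3*x+3)*(mg x - tn)/((x+4)*tn*(mg x))| ≤ (27/64) * (102400/x^3) := by
    have hr : (3*x+3)*(mg x - tn)/((x+4)*tn*(mg x)) = ((3*x+3)/((x+4)*tn*(mg x))) * (mg x - tn) := by
      ring
    rw [hr, abs_mul, abs_of_pos (show (0:ℝ) < (3*x+3)/((x+4)*tn*(mg x)) by positivity),
      abs_sub_comm]
    exact mul_le_mul hc h (abs_nonneg _) (by norm_num)
  have hB : |(-39168*x^2+28935*x-134964)/(16*(x+1)^2*(x+4)*(48*x^2-72*x+207))| ≤ 52/x^3 := by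
    have hden : (0:ℝ) < 16*(x+1)^2*(x+4)*(48*x^2-72*x+207) := by positivity
    have hnum : (-39168*x^2+28935*x-134964) < 0 := by nlinarith
    rw [abs_div, abs_of_pos hden, abs_of_neg hnum, div_le_div_iff₀ (by positivity) (by positivity)]
    have hy : (0:ℝ) ≤ x - 50 := by linarith
    nlinarith [pow_nonneg hy 2, pow_nonneg hy 3, pow_nonneg hy 4, pow_nonneg hy 5,
      mul_nonneg (pow_nonneg hy 2) hy, mul_nonneg (mul_nonneg hy hy) hy]
  calc |tn1 - mg (x+1)| ≤ (27/64) * (102400/x^3) + 52/x^3 := by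
        rw [dec]; exact (abs_add_le _ _).trans (add_le_add hA hB)
    _ = 43252/x^3 := by ring
    _ ≤ 102400/(x+1)^3 := by
        rw [div_le_div_iff₀ (by positivity) (by positivity)]
        have hy : (0:ℝ) ≤ x - 50 := by linarith
        nlinarith [pow_nonneg hy 2, pow_nonneg hy 3]

lemma motz_bounds (t : ℕ → ℝ) (hpos : ∀ m, 0 < t m) (ht0 : t 0 = 1)
    (ht : ∀ m : ℕ, ((m:ℝ)+4) * (t (m+1) * t m) = (2*m+5) * t m + (3*m+3)) :
    ∀ m : ℕ, 3*((m:ℝ)+1)/((m:ℝ)+7) ≤ t m ∧ t m ≤ 3 := by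
  intro m
  induction m with
  | zero => norm_num [ht0]
  | succ n ih =>
    obtain ⟨hlb, hub⟩ := ih
    have hp := hpos n
    have h7 : (0:ℝ) < (n:ℝ)+7 := by positivity
    have h4 : (0:ℝ) < ((n:ℝ)+4) * t n := by positivity
    have hlb' : 3*((n:ℝ)+1) ≤ ((n:ℝ)+7) * t n := by
      rw [div_le_iff₀ h7] at hlb; linarith
    have hrec := ht n
    constructor
    · push_cast
      rw [div_le_iff₀ (by positivity)]
      rw [← mul_le_mul_iff_of_pos_right h4]
      nlinarith [mul_nonneg (sub_nonneg.2 hub) (sq_nonneg (n:ℝ)), hp.le,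
        mul_pos hp (show (0:ℝ) < 3*(n:ℝ)+16 by positivity)]
    · rw [← mul_le_mul_iff_of_pos_right h4]
      nlinarith [hlb']

theorem stmt_15 (M : ℕ → ℕ) (hM0 : M 0 = 1) (hM1 : M 1 = 1)
    (hrec : ∀ n : ℕ, 2 ≤ n →
      (n + 2) * M n = (2 * n + 1) * M (n - 1) + (3 * n - 3) * M (n - 2)) :
    Filter.Tendsto
      (fun n : ℕ => (n : ℝ) ^ 2 * ((M n : ℝ) * (M (n + 2) : ℝ) / ((M (n + 1) : ℝ)) ^ 2 - 1))
      Filter.atTop (nhds (3 / 2)) := by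
  have hMrec : ∀ m : ℕ, (m+4) * M (m+2) = (2*m+5) * M (m+1) + (3*m+3) * M m := by
    intro m
    have h := hrec (m+2) (by omega)
    rw [show m+2-1 = m+1 from rfl, show m+2-2 = m from rfl,
      show 3*(m+2)-3 = 3*m+3 by omega, show m+2+2 = m+4 from rfl,
      show 2*(m+2)+1 = 2*m+5 by ring] at h
    exact h
  have hMpos : ∀ n, 0 < M n := by
    have key : ∀ n, 0 < M n ∧ 0 < M (n+1) := by
      intro n
      induction n with
      | zero => simp [hM0, hM1]
      | succ k ih =>
        refine ⟨ih.2, ?_⟩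
        have h := hMrec k
        rcases Nat.eq_zero_or_pos (M (k+2)) with h0 | h0
        · rw [h0, Nat.mul_zero] at h
          nlinarith [ih.1, ih.2]
        · exact h0
    exact fun n => (key n).1
  set t : ℕ → ℝ := fun n => (M (n+1) : ℝ) / (M n : ℝ) with ht_def
  have hMne : ∀ n, (M n : ℝ) ≠ 0 := fun n => Nat.cast_ne_zero.2 (hMpos n).ne'
  have htpos : ∀ n, 0 < t n := fun n => div_pos (by exact_mod_cast hMpos (n+1)) (by exact_mod_cast hMpos n)
  have ht0 : t 0 = 1 := by simp [ht_def, hM0, hM1]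
  have htrec : ∀ m : ℕ, ((m:ℝ)+4) * (t (m+1) * t m) = (2*m+5) * t m + (3*m+3) := by
    intro m
    have h : ((m:ℝ)+4) * M (m+2) = (2*m+5) * M (m+1) + (3*m+3) * M m := by
      exact_mod_cast hMrec m
    have e1 : t (m+1) * t m = (M (m+2) : ℝ) / M m := by
      simp only [ht_def]
      rw [div_mul_div_comm, mul_comm ((M (m+2):ℝ)) _, mul_div_mul_left _ _ (hMne (m+1))]
    rw [e1]
    simp only [ht_def]
    have hm0 := hMne m
    field_simp
    linear_combination h
  have hbounds := motz_bounds t htpos ht0 htrec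
  have herr : ∀ k : ℕ, |t (50+k) - mg ((50+k : ℕ) : ℝ)| ≤ 102400/((50+k : ℕ) : ℝ)^3 := by
    intro k
    induction k with
    | zero =>
      have h1 := (hbounds 50).1
      have h2 := (hbounds 50).2
      rw [abs_le, mg]
      push_cast at h1 ⊢
      norm_num at h1 ⊢
      constructor <;> linarith
    | succ k ih =>
      have hk : (0:ℝ) ≤ (k:ℝ) := Nat.cast_nonneg k
      have hx : (50:ℝ) ≤ ((50+k : ℕ) : ℝ) := by push_cast; linarith
      have hlb : 8/3 ≤ t (50+k) := by
        have h1 := (hbounds (50+k)).1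
        have h3 : (8:ℝ)/3 ≤ 3*(((50+k:ℕ):ℝ)+1)/(((50+k:ℕ):ℝ)+7) := by
          rw [le_div_iff₀ (by positivity)]
          push_cast; linarith
        linarith
      have hstep := motz_step ((50+k:ℕ):ℝ) (t (50+k)) (t (50+k+1)) hx hlb
        (hbounds (50+k)).2 (htrec (50+k)) ih
      have e2 : ((50+(k+1):ℕ):ℝ) = ((50+k:ℕ):ℝ) + 1 := by push_cast; ring
      rw [show 50+(k+1) = 50+k+1 from rfl] at *
      rw [show ((50+k+1:ℕ):ℝ) = ((50+k:ℕ):ℝ) + 1 by push_cast; ring]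
      exact hstep
  have herr' : ∀ n : ℕ, 50 ≤ n → |t n - mg (n:ℝ)| ≤ 102400/(n:ℝ)^3 := by
    intro n hn
    obtain ⟨k, rfl⟩ := Nat.exists_eq_add_of_le hn
    exact herr k
  -- t n tends to 3
  have h7 : Filter.Tendsto (fun n : ℕ => (n:ℝ)+7) Filter.atTop Filter.atTop :=
    Filter.tendsto_atTop_add_const_right _ 7 tendsto_natCast_atTop_atTop
  have hinv7 : Filter.Tendsto (fun n : ℕ => 18/((n:ℝ)+7)) Filter.atTop (nhds 0) := by
    have := (tendsto_inv_atTop_zero.comp h7).const_mul (18:ℝ)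
    simpa [Function.comp, div_eq_mul_inv] using this
  have ht3 : Filter.Tendsto t Filter.atTop (nhds 3) := by
    apply tendsto_of_tendsto_of_tendsto_of_le_of_le
      (g := fun n : ℕ => 3 - 18/((n:ℝ)+7)) (h := fun _ : ℕ => (3:ℝ))
    · simpa using (tendsto_const_nhds (x := (3:ℝ)) (f := Filter.atTop (α := ℕ))).sub hinv7
    · exact tendsto_const_nhds
    · intro n
      have h1 := (hbounds n).1
      have h70 : ((n:ℝ)+7) ≠ 0 := by positivity
      have e : 3*((n:ℝ)+1)/((n:ℝ)+7) = 3 - 18/((n:ℝ)+7) := by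
        field_simp
        ring
      linarith [e ▸ h1]
    · exact fun n => (hbounds n).2
  -- main numerator limit
  have hu : Filter.Tendsto (fun n:ℕ => 1/((n:ℝ)+1)) Filter.atTop (nhds 0) :=
    tendsto_one_div_add_atTop_nhds_zero_nat
  have hGlim : Filter.Tendsto (fun n : ℕ => (n:ℝ)^2 * (mg ((n+1:ℕ):ℝ) - mg (n:ℝ)))
      Filter.atTop (nhds (9/2)) := by
    have hphi : Filter.Tendsto (fun n:ℕ =>
        (9/2)*(1 - 1/((n:ℝ)+1)) + (207/16)*((1 - 1/((n:ℝ)+1))^2 - 1))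
        Filter.atTop (nhds (9/2)) := by
      have h1 : Filter.Tendsto (fun n:ℕ => 1 - 1/((n:ℝ)+1)) Filter.atTop (nhds 1) := by
        simpa using (tendsto_const_nhds (x := (1:ℝ)) (f := Filter.atTop (α := ℕ))).sub hu
      have := (h1.const_mul (9/2:ℝ)).add
        (((h1.pow 2).sub (tendsto_const_nhds (x := (1:ℝ)))).const_mul (207/16:ℝ))
      norm_num at this
      simpa [one_div] using this
    apply hphi.congr'
    filter_upwards [Filter.eventually_ge_atTop 1] with n hn
    have hn0 : (n:ℝ) ≠ 0 := Nat.cast_ne_zero.2 (by omega)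
    have hn1 : ((n:ℝ)+1) ≠ 0 := by positivity
    rw [mg, mg]
    push_cast
    field_simp
    ring
  have hElim : Filter.Tendsto
      (fun n : ℕ => (n:ℝ)^2 * ((t (n+1) - mg ((n+1:ℕ):ℝ)) - (t n - mg (n:ℝ))))
      Filter.atTop (nhds 0) := by
    apply squeeze_zero_norm' (a := fun n : ℕ => 204800/(n:ℝ))
    · filter_upwards [Filter.eventually_ge_atTop 50] with n hn
      have h1 := herr' n hn
      have h2 := herr' (n+1) (by omega)
      have hx : (50:ℝ) ≤ (n:ℝ) := by exact_mod_cast hn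
      have hx0 : (0:ℝ) < (n:ℝ) := by linarith
      rw [show ((n+1:ℕ):ℝ) = (n:ℝ)+1 by push_cast; ring] at h2
      rw [Real.norm_eq_abs, abs_mul, abs_of_nonneg (by positivity : (0:ℝ) ≤ (n:ℝ)^2)]
      have htri : |(t (n+1) - mg ((n+1:ℕ):ℝ)) - (t n - mg (n:ℝ))|
          ≤ 102400/((n:ℝ)+1)^3 + 102400/(n:ℝ)^3 := by
        refine (abs_sub _ _).trans (add_le_add ?_ h1)
        rw [show ((n+1:ℕ):ℝ) = (n:ℝ)+1 by push_cast; ring]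
        exact h2
      have hb : 102400/((n:ℝ)+1)^3 + 102400/(n:ℝ)^3 ≤ 204800/(n:ℝ)^3 := by
        have : 102400/((n:ℝ)+1)^3 ≤ 102400/(n:ℝ)^3 := by
          apply div_le_div_of_nonneg_left (by norm_num) (by positivity)
          nlinarith
        have e2 : (204800:ℝ)/(n:ℝ)^3 = 102400/(n:ℝ)^3 + 102400/(n:ℝ)^3 := by ring
        linarith
      calc (n:ℝ)^2 * |(t (n+1) - mg ((n+1:ℕ):ℝ)) - (t n - mg (n:ℝ))|
          ≤ (n:ℝ)^2 * (204800/(n:ℝ)^3) := by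
            exact mul_le_mul_of_nonneg_left (htri.trans hb) (by positivity)
        _ = 204800/(n:ℝ) := by field_simp
    · have := (tendsto_inv_atTop_zero.comp tendsto_natCast_atTop_atTop).const_mul (204800:ℝ)
      simpa [Function.comp, div_eq_mul_inv] using this
  have hA : Filter.Tendsto (fun n : ℕ => (n:ℝ)^2 * (t (n+1) - t n)) Filter.atTop (nhds (9/2)) := by
    have hsum := hGlim.add hElim
    norm_num at hsum
    apply hsum.congr
    intro n
    ring
  have final := hA.div ht3 (by norm_num)
  norm_num at final
  apply final.congr
  intro n
  rw [Pi.div_apply]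
  have hm0 := hMne n
  have hm1 := hMne (n+1)
  simp only [ht_def]
  rw [show ((n+1)+1) = n+2 from rfl]
  field_simp
end

section
/- Let $\{a_n\}$ be a positive sequence and suppose for some $N$ and all $n \ge N$: $\frac{3}{4}n^3+\frac{3}{2}n^2+\frac{25}{12}n+\frac{19}{9} \le \frac{a_{n+1}}{a_n} \le \frac{3}{4}n^3+\frac{3}{2}n^2+\frac{25}{12}n+\frac{37}{9}$. Then for all $n \ge \max(N, 8)$, $1 + \frac{3}{n} \le \frac{a_n a_{n+2}}{a_{n+1}^2} \le 1 + \frac{3}{n} + \frac{2}{n^2}$, and consequently $\{a_n\}_{n \ge \max(N,8)}$ is 2-log-convex. -/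
private lemma aux_ratio (y p q : ℝ) (hy : 8 ≤ y) (hp : 0 < p)
    (hpl : 3 / 4 * y ^ 3 + 3 / 2 * y ^ 2 + 25 / 12 * y + 19 / 9 ≤ p)
    (hpu : p ≤ 3 / 4 * y ^ 3 + 3 / 2 * y ^ 2 + 25 / 12 * y + 37 / 9)
    (hql : 3 / 4 * (y + 1) ^ 3 + 3 / 2 * (y + 1) ^ 2 + 25 / 12 * (y + 1) + 19 / 9 ≤ q)
    (hqu : q ≤ 3 / 4 * (y + 1) ^ 3 + 3 / 2 * (y + 1) ^ 2 + 25 / 12 * (y + 1) + 37 / 9) :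
    1 + 3 / y ≤ q / p ∧ q / p ≤ 1 + 3 / y + 2 / y ^ 2 := by
  have hy0 : 0 < y := by linarith
  constructor
  · rw [show (1 : ℝ) + 3 / y = (y + 3) / y by field_simp, div_le_div_iff₀ hy0 hp]
    nlinarith [hy0, hy]
  · rw [show (1 : ℝ) + 3 / y + 2 / y ^ 2 = (y ^ 2 + 3 * y + 2) / y ^ 2 by field_simp,
      div_le_div_iff₀ hp (by positivity : (0:ℝ) < y ^ 2)]
    nlinarith [hy0, hy]

set_option maxHeartbeats 1000000 in
theorem stmt_18 (a : ℕ → ℝ) (hpos : ∀ n, 0 < a n) (N : ℕ)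
    (h : ∀ n ≥ N,
      3 / 4 * (n : ℝ) ^ 3 + 3 / 2 * (n : ℝ) ^ 2 + 25 / 12 * n + 19 / 9 ≤ a (n + 1) / a n ∧
      a (n + 1) / a n ≤ 3 / 4 * (n : ℝ) ^ 3 + 3 / 2 * (n : ℝ) ^ 2 + 25 / 12 * n + 37 / 9) :
    ∀ n ≥ max N 8,
      (1 + 3 / (n : ℝ) ≤ a n * a (n + 2) / (a (n + 1)) ^ 2 ∧
        a n * a (n + 2) / (a (n + 1)) ^ 2 ≤ 1 + 3 / (n : ℝ) + 2 / (n : ℝ) ^ 2) ∧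
      a n * a (n + 2) ≥ (a (n + 1)) ^ 2 ∧
      (a n * a (n + 2) - (a (n + 1)) ^ 2) * (a (n + 2) * a (n + 4) - (a (n + 3)) ^ 2) ≥
        (a (n + 1) * a (n + 3) - (a (n + 2)) ^ 2) ^ 2 := by
  intro n hn
  have hN : N ≤ n := le_of_max_le_left hn
  have h8 : (8 : ℝ) ≤ (n : ℝ) := by exact_mod_cast le_of_max_le_right hn
  set x : ℝ := (n : ℝ) with hxdef
  have hx0 : 0 < x := by linarith
  -- ratio identity
  have hrid : ∀ m : ℕ, a m * a (m + 2) / (a (m + 1)) ^ 2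
      = (a (m + 2) / a (m + 1)) / (a (m + 1) / a m) := by
    intro m
    field_simp
  obtain ⟨h0l, h0u⟩ := h n hN
  obtain ⟨h1l, h1u⟩ := h (n + 1) (by omega)
  obtain ⟨h2l, h2u⟩ := h (n + 2) (by omega)
  obtain ⟨h3l, h3u⟩ := h (n + 3) (by omega)
  push_cast at h0l h0u h1l h1u h2l h2u h3l h3u
  have hq : ∀ k : ℕ, 0 < a (k + 1) / a k := fun k => div_pos (hpos _) (hpos _)
  -- ratio bounds at n, n+1, n+2
  have hr0 := aux_ratio x (a (n+1)/a n) (a (n+2)/a (n+1)) h8 (hq n) h0l h0u h1l h1u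
  have hr1 := aux_ratio (x+1) (a (n+2)/a (n+1)) (a (n+3)/a (n+2)) (by linarith) (hq (n+1))
    h1l h1u (by convert h2l using 2 <;> ring) (by convert h2u using 2 <;> ring)
  have hr2 := aux_ratio (x+2) (a (n+3)/a (n+2)) (a (n+4)/a (n+3)) (by linarith) (hq (n+2))
    (by convert h2l using 2 <;> ring) (by convert h2u using 2 <;> ring)
    (by convert h3l using 2 <;> ring) (by convert h3u using 2 <;> ring)
  rw [← hrid n] at hr0
  rw [← hrid (n+1)] at hr1
  rw [← hrid (n+2)] at hr2
  set A := a n; set B := a (n+1); set C := a (n+2); set D := a (n+3); set E := a (n+4)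
  have hB : 0 < B := hpos _
  have hC : 0 < C := hpos _
  have hD : 0 < D := hpos _
  have hB2 : (0:ℝ) < B ^ 2 := by positivity
  have hC2 : (0:ℝ) < C ^ 2 := by positivity
  have hD2 : (0:ℝ) < D ^ 2 := by positivity
  refine ⟨hr0, ?_, ?_⟩
  -- scaled polynomial forms of the ratio bounds
  · have h1 := hr0.1
    rw [show (1:ℝ) + 3 / x = (x + 3) / x by field_simp, div_le_div_iff₀ hx0 hB2] at h1
    nlinarith [h1, hB2, hx0]
  · have s1 : 3 * B ^ 2 ≤ x * (A * C - B ^ 2) := by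
      have h1 := hr0.1
      rw [show (1:ℝ) + 3 / x = (x + 3) / x by field_simp, div_le_div_iff₀ hx0 hB2] at h1
      linarith [h1]
    have s3 : 3 * D ^ 2 ≤ (x + 2) * (C * E - D ^ 2) := by
      have h1 := hr2.1
      rw [show (1:ℝ) + 3 / (x+2) = (x + 5) / (x+2) by field_simp; ring, div_le_div_iff₀ (by linarith) hD2] at h1
      linarith [h1]
    have s2l : (x + 4) * C ^ 2 ≤ (x + 1) * (B * D) := by
      have h1 := hr1.1
      rw [show (1:ℝ) + 3 / (x+1) = (x + 4) / (x+1) by field_simp; ring, div_le_div_iff₀ (by linarith) hC2] at h1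
      linarith [h1]
    have s2u : (x + 1) ^ 2 * (B * D - C ^ 2) ≤ (3 * x + 5) * C ^ 2 := by
      have h1 := hr1.2
      rw [show (1:ℝ) + 3 / (x+1) + 2 / (x+1) ^ 2 = (x ^ 2 + 5 * x + 6) / (x+1) ^ 2 by
        field_simp; ring, div_le_div_iff₀ hC2 (by positivity)] at h1
      linarith [h1]
    have hBD : 0 ≤ (x + 1) ^ 2 * (B * D - C ^ 2) := by nlinarith [s2l, hC2]
    have e1 : 9 * (B ^ 2 * D ^ 2) ≤ (x * (A * C - B ^ 2)) * ((x + 2) * (C * E - D ^ 2)) := by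
      have := mul_le_mul s1 s3 (by positivity) (le_trans (by positivity) s1)
      linarith [this]
    have e2 : ((x + 4) * C ^ 2) ^ 2 ≤ ((x + 1) * (B * D)) ^ 2 :=
      pow_le_pow_left₀ (by positivity) s2l 2
    have e3 : ((x + 1) ^ 2 * (B * D - C ^ 2)) ^ 2 ≤ ((3 * x + 5) * C ^ 2) ^ 2 :=
      pow_le_pow_left₀ hBD s2u 2
    have poly : (3 * x + 5) ^ 2 * (x * (x + 2)) * (C ^ 2) ^ 2
        ≤ 9 * (x + 4) ^ 2 * (x + 1) ^ 2 * (C ^ 2) ^ 2 := by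
      have hp : (3 * x + 5) ^ 2 * (x * (x + 2)) ≤ 9 * (x + 4) ^ 2 * (x + 1) ^ 2 := by nlinarith [h8]
      exact mul_le_mul_of_nonneg_right hp (by positivity)
    have hK : (x * (x + 2) * (x + 1) ^ 4) * ((B * D - C ^ 2) ^ 2)
        ≤ (x * (x + 2) * (x + 1) ^ 4) * ((A * C - B ^ 2) * (C * E - D ^ 2)) := by
      linarith [mul_le_mul_of_nonneg_left e3 (show (0:ℝ) ≤ x * (x + 2) by positivity),
        poly,
        mul_le_mul_of_nonneg_left e2 (show (0:ℝ) ≤ 9 * (x + 1) ^ 2 by positivity),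
        mul_le_mul_of_nonneg_left e1 (show (0:ℝ) ≤ (x + 1) ^ 4 by positivity)]
    have hKpos : (0:ℝ) < x * (x + 2) * (x + 1) ^ 4 := by positivity
    exact (mul_le_mul_iff_right₀ hKpos).mp hK
end

section
/- Let $c_1 > 0$, $\alpha > 0$, and let $\{a_n\}$ be a positive sequence with $n^{\alpha}(a_na_{n+2}/a_{n+1}^2 - 1) \to c_1$. Define $b_n = a_na_{n+2} - a_{n+1}^2$ (so $b_n > 0$ eventually). If $\alpha \ge 2$, then $n^2(b_n b_{n+2}/b_{n+1}^2 - 1)$ converges to $2c_1 + \alpha$ when $\alpha = 2$ and to $\alpha$ when $\alpha > 2$; in both cases the limit is positive, so $\{a_n\}$ is asymptotically 2-log-convex. -/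
open Filter

lemma lem_div_add (k : ℝ) (hk : 0 ≤ k) :
    Tendsto (fun n : ℕ => (n:ℝ)/((n:ℝ)+k)) atTop (nhds 1) := by
  have h1 : Tendsto (fun n : ℕ => (n:ℝ)+k) atTop atTop :=
    tendsto_atTop_add_const_right _ _ tendsto_natCast_atTop_atTop
  have h2 : Tendsto (fun n : ℕ => k/((n:ℝ)+k)) atTop (nhds 0) :=
    Tendsto.div_atTop tendsto_const_nhds h1
  have h3 : Tendsto (fun n : ℕ => 1 - k/((n:ℝ)+k)) atTop (nhds 1) := by
    simpa using (tendsto_const_nhds (x := (1:ℝ)) (f := atTop)).sub h2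
  refine h3.congr' ?_
  filter_upwards [eventually_ge_atTop 1] with n hn
  have hn' : (0:ℝ) < (n:ℝ) + k := by
    have : (1:ℝ) ≤ (n:ℝ) := by exact_mod_cast hn
    linarith
  field_simp
  ring

lemma lem_shift {u : ℕ → ℝ} {l : ℝ} (k : ℕ) (h : Tendsto u atTop (nhds l)) :
    Tendsto (fun n => u (n+k)) atTop (nhds l) :=
  h.comp (tendsto_add_atTop_nat k)

noncomputable def rseq (a : ℕ → ℝ) (n : ℕ) : ℝ := a n * a (n+2) / (a (n+1))^2 - 1
noncomputable def sseq (a : ℕ → ℝ) (α : ℝ) (n : ℕ) : ℝ := (n:ℝ)^α * rseq a n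

lemma lem_e_eq (a : ℕ → ℝ) (c₁ α : ℝ) (n : ℕ) (hn : 1 ≤ n) :
    (n:ℝ)^(α+2) * (a n * a (n + 2) / (a (n + 1))^2 - 1 - c₁/(n:ℝ)^α)
      = (n:ℝ)^2 * (sseq a α n - c₁) := by
  have hn0 : (0:ℝ) < (n:ℝ) := by exact_mod_cast hn
  have hrpow : (0:ℝ) < (n:ℝ)^α := Real.rpow_pos_of_pos hn0 α
  have h1 : (n:ℝ)^(α+2) = (n:ℝ)^α * (n:ℝ)^2 := by
    rw [Real.rpow_add hn0]
    norm_num [Real.rpow_two]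
  rw [h1, sseq, rseq]
  field_simp

lemma lem_e2 (a : ℕ → ℝ) (c₁ α : ℝ)
    (h : Tendsto (fun n : ℕ => (n : ℝ) ^ (α + 2) *
        (a n * a (n + 2) / (a (n + 1)) ^ 2 - 1 - c₁ / (n : ℝ) ^ α)) atTop (nhds 0)) :
    Tendsto (fun n : ℕ => (n:ℝ)^2 * (sseq a α n - c₁)) atTop (nhds 0) := by
  refine h.congr' ?_
  filter_upwards [eventually_ge_atTop 1] with n hn
  exact lem_e_eq a c₁ α n hn

lemma lem_e2_shift (a : ℕ → ℝ) (c₁ α : ℝ)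
    (h2 : Tendsto (fun n : ℕ => (n:ℝ)^2 * (sseq a α n - c₁)) atTop (nhds 0)) (k : ℕ) :
    Tendsto (fun n : ℕ => (n:ℝ)^2 * (sseq a α (n+k) - c₁)) atTop (nhds 0) := by
  have hq : Tendsto (fun n : ℕ => ((n:ℝ)/((n:ℝ)+k))^2) atTop (nhds 1) := by
    simpa using (lem_div_add (k:ℝ) (by positivity)).pow 2
  have hsh : Tendsto (fun n : ℕ => ((n+k:ℕ):ℝ)^2 * (sseq a α (n+k) - c₁)) atTop (nhds 0) :=
    lem_shift k h2
  have := hq.mul hsh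
  rw [one_mul] at this
  refine this.congr' ?_
  filter_upwards [eventually_ge_atTop 1] with n hn
  have hn0 : (0:ℝ) < (n:ℝ) + (k:ℝ) := by
    have : (1:ℝ) ≤ (n:ℝ) := by exact_mod_cast hn
    positivity
  push_cast
  field_simp

lemma lem_s_lim (a : ℕ → ℝ) (c₁ α : ℝ)
    (h2 : Tendsto (fun n : ℕ => (n:ℝ)^2 * (sseq a α n - c₁)) atTop (nhds 0)) :
    Tendsto (fun n : ℕ => sseq a α n) atTop (nhds c₁) := by
  have hinv : Tendsto (fun n : ℕ => ((n:ℝ)^2)⁻¹) atTop (nhds 0) :=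
    ((tendsto_pow_atTop (two_ne_zero)).comp (tendsto_natCast_atTop_atTop (R := ℝ))).inv_tendsto_atTop
  have := h2.mul hinv
  rw [zero_mul] at this
  have h3 : Tendsto (fun n : ℕ => c₁ + (n:ℝ)^2 * (sseq a α n - c₁) * ((n:ℝ)^2)⁻¹)
      atTop (nhds c₁) := by simpa using (tendsto_const_nhds (x := c₁) (f := atTop)).add this
  refine h3.congr' ?_
  filter_upwards [eventually_ge_atTop 1] with n hn
  have hn0 : (0:ℝ) < (n:ℝ) := by exact_mod_cast hn
  field_simp
  ring

section Main
variable (a : ℕ → ℝ) (c₁ α : ℝ)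

lemma lem_B (h0 : Tendsto (fun n : ℕ => (n:ℝ)^2 * (sseq a α n - c₁)) atTop (nhds 0)) :
    Tendsto (fun n : ℕ => (n:ℝ)^2 * (sseq a α n * sseq a α (n+2) - (sseq a α (n+1))^2))
      atTop (nhds 0) := by
  have h1 := lem_e2_shift a c₁ α h0 1
  have h2 := lem_e2_shift a c₁ α h0 2
  have hs0 := lem_s_lim a c₁ α h0
  have hs1 := lem_shift 1 hs0
  have hs2 := lem_shift 2 hs0
  have key := ((h0.mul hs2).add ((tendsto_const_nhds (x := c₁) (f := atTop)).mul h2)).sub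
      (h1.mul (hs1.add (tendsto_const_nhds (x := c₁))))
  rw [show (0:ℝ) * c₁ + c₁ * 0 - 0 * (c₁ + c₁) = 0 by ring] at key
  refine key.congr fun n => by ring

lemma lem_Bdiv (hc : 0 < c₁)
    (h0 : Tendsto (fun n : ℕ => (n:ℝ)^2 * (sseq a α n - c₁)) atTop (nhds 0)) :
    Tendsto (fun n : ℕ => (n:ℝ)^2 * (sseq a α n * sseq a α (n+2) / (sseq a α (n+1))^2 - 1))
      atTop (nhds 0) := by
  have hs1 : Tendsto (fun n : ℕ => (sseq a α (n+1))^2) atTop (nhds (c₁^2)) :=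
    (lem_shift 1 (lem_s_lim a c₁ α h0)).pow 2
  have key := (lem_B a c₁ α h0).div hs1 (by positivity)
  rw [zero_div] at key
  refine key.congr' ?_
  have hpos1 : ∀ᶠ n in atTop, 0 < sseq a α (n+1) :=
    (lem_shift 1 (lem_s_lim a c₁ α h0)).eventually (eventually_gt_nhds hc)
  filter_upwards [hpos1] with n hn
  have : (sseq a α (n+1))^2 ≠ 0 := by positivity
  simp only [Pi.div_apply]
  field_simp

lemma lem_r0 (hα : 2 ≤ α)
    (h0 : Tendsto (fun n : ℕ => (n:ℝ)^2 * (sseq a α n - c₁)) atTop (nhds 0)) :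
    Tendsto (fun n : ℕ => rseq a (n+1)) atTop (nhds 0) := by
  have hα0 : (0:ℝ) < α := by linarith
  have hs1 := lem_shift 1 (lem_s_lim a c₁ α h0)
  have hpow : Tendsto (fun n : ℕ => ((n:ℝ)+1)^(-α)) atTop (nhds 0) :=
    (tendsto_rpow_neg_atTop hα0).comp
      (tendsto_atTop_add_const_right _ 1 tendsto_natCast_atTop_atTop)
  have key := hs1.mul hpow
  rw [mul_zero] at key
  refine key.congr fun n => ?_
  have h1 : (0:ℝ) < (n:ℝ)+1 := by positivity
  rw [sseq, Real.rpow_neg h1.le]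
  push_cast
  field_simp

lemma lem_A (hα : 2 ≤ α) (L : ℝ)
    (hL : Tendsto (fun n : ℕ => ((n:ℝ)+1)^(2-α)) atTop (nhds L))
    (h0 : Tendsto (fun n : ℕ => (n:ℝ)^2 * (sseq a α n - c₁)) atTop (nhds 0)) :
    Tendsto (fun n : ℕ => (n:ℝ)^2 * ((1 + rseq a (n+1))^2 - 1)) atTop (nhds (2*c₁*L)) := by
  have hs1 := lem_shift 1 (lem_s_lim a c₁ α h0)
  have hq : Tendsto (fun n : ℕ => ((n:ℝ)/((n:ℝ)+1))^2) atTop (nhds 1) := by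
    simpa using (lem_div_add 1 (by norm_num)).pow 2
  have h2r : Tendsto (fun n : ℕ => 2 + rseq a (n+1)) atTop (nhds 2) := by
    simpa using (tendsto_const_nhds (x := (2:ℝ)) (f := atTop)).add (lem_r0 a c₁ α hα h0)
  have key := ((hq.mul hL).mul hs1).mul h2r
  rw [show 1 * L * c₁ * 2 = 2*c₁*L by ring] at key
  refine key.congr fun n => ?_
  have h1 : (0:ℝ) < (n:ℝ)+1 := by positivity
  have hPQ : ((n:ℝ)+1)^(2-α) * ((n:ℝ)+1)^α = ((n:ℝ)+1)^2 := by
    rw [← Real.rpow_add h1, sub_add_cancel, Real.rpow_two]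
  have hsr : sseq a α (n+1) = ((n:ℝ)+1)^α * rseq a (n+1) := by
    rw [sseq]; push_cast; ring
  rw [hsr]
  field_simp
  linear_combination ((n:ℝ)^2 * rseq a (n+1) * (2 + rseq a (n+1))) * hPQ

lemma lem_C :
    Tendsto (fun n : ℕ => (n:ℝ)^2 * ((1 + ((n:ℝ)*((n:ℝ)+2))⁻¹)^α - 1)) atTop (nhds α) := by
  have hd : HasDerivAt (fun y : ℝ => y^α) α 1 := by
    simpa using Real.hasDerivAt_rpow_const (p := α) (x := 1) (Or.inl one_ne_zero)
  have hslope := hasDerivAt_iff_tendsto_slope.mp hd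
  have hmul : Tendsto (fun n : ℕ => (n:ℝ)*((n:ℝ)+2)) atTop atTop :=
    tendsto_natCast_atTop_atTop.atTop_mul_atTop₀
      (tendsto_atTop_add_const_right _ 2 tendsto_natCast_atTop_atTop)
  have hx0 : Tendsto (fun n : ℕ => ((n:ℝ)*((n:ℝ)+2))⁻¹) atTop (nhds 0) :=
    hmul.inv_tendsto_atTop
  have hu : Tendsto (fun n : ℕ => 1 + ((n:ℝ)*((n:ℝ)+2))⁻¹) atTop (nhdsWithin 1 {(1:ℝ)}ᶜ) := by
    rw [tendsto_nhdsWithin_iff]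
    constructor
    · simpa using (tendsto_const_nhds (x := (1:ℝ)) (f := atTop)).add hx0
    · filter_upwards [eventually_ge_atTop 1] with n hn
      have hn0 : (0:ℝ) < (n:ℝ) := by exact_mod_cast hn
      have : (0:ℝ) < ((n:ℝ)*((n:ℝ)+2))⁻¹ := by positivity
      simp only [Set.mem_compl_iff, Set.mem_singleton_iff]
      linarith
  have hcomp := hslope.comp hu
  have hnn : Tendsto (fun n : ℕ => (n:ℝ)/((n:ℝ)+2)) atTop (nhds 1) :=
    lem_div_add 2 (by norm_num)
  have key := hnn.mul hcomp
  rw [one_mul] at key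
  refine key.congr' ?_
  filter_upwards [eventually_ge_atTop 1] with n hn
  have hn0 : (0:ℝ) < (n:ℝ) := by exact_mod_cast hn
  have hprod : (0:ℝ) < (n:ℝ)*((n:ℝ)+2) := by positivity
  simp only [Function.comp, slope_def_field]
  rw [Real.one_rpow]
  field_simp
  ring

lemma lem_x0 : Tendsto (fun n : ℕ => ((n:ℝ)*((n:ℝ)+2))⁻¹) atTop (nhds 0) := by
  have hmul : Tendsto (fun n : ℕ => (n:ℝ)*((n:ℝ)+2)) atTop atTop :=
    tendsto_natCast_atTop_atTop.atTop_mul_atTop₀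
      (tendsto_atTop_add_const_right _ 2 tendsto_natCast_atTop_atTop)
  exact hmul.inv_tendsto_atTop

lemma lem_C1 : Tendsto (fun n : ℕ => (1 + ((n:ℝ)*((n:ℝ)+2))⁻¹)^α) atTop (nhds 1) := by
  have h1x : Tendsto (fun n : ℕ => 1 + ((n:ℝ)*((n:ℝ)+2))⁻¹) atTop (nhds 1) := by
    simpa using (tendsto_const_nhds (x := (1:ℝ)) (f := atTop)).add lem_x0
  have := ((Real.continuousAt_rpow_const 1 α (Or.inl one_ne_zero)).tendsto).comp h1x
  simpa [Function.comp_def] using this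

lemma lem_br (hpos : ∀ n, 0 < a n) (b : ℕ → ℝ)
    (hb : ∀ n, b n = a n * a (n + 2) - (a (n + 1)) ^ 2) (n : ℕ) :
    b n = (a (n+1))^2 * rseq a n := by
  have h1 : (a (n+1)) ≠ 0 := (hpos (n+1)).ne'
  rw [hb, rseq]
  field_simp

set_option maxHeartbeats 1000000 in
lemma lem_main (hpos : ∀ n, 0 < a n) (hc : 0 < c₁) (hα : 2 ≤ α)
    (h : Tendsto (fun n : ℕ => (n : ℝ) ^ (α + 2) *
        (a n * a (n + 2) / (a (n + 1)) ^ 2 - 1 - c₁ / (n : ℝ) ^ α)) atTop (nhds 0))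
    (L : ℝ) (hL : Tendsto (fun n : ℕ => ((n:ℝ)+1)^(2-α)) atTop (nhds L))
    (b : ℕ → ℝ) (hb : ∀ n, b n = a n * a (n + 2) - (a (n + 1)) ^ 2) :
    (∀ᶠ n in atTop, 0 < b n) ∧
    Tendsto (fun n : ℕ => (n:ℝ)^2 * (b n * b (n+2) / (b (n+1))^2 - 1))
      atTop (nhds (2*c₁*L + α)) := by
  have h0 := lem_e2 a c₁ α h
  have hs := lem_s_lim a c₁ α h0
  have hs1 := lem_shift 1 hs
  have hs2 := lem_shift 2 hs
  have hev0 : ∀ᶠ n in atTop, 0 < sseq a α n := hs.eventually (eventually_gt_nhds hc)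
  have hev1 : ∀ᶠ n in atTop, 0 < sseq a α (n+1) := hs1.eventually (eventually_gt_nhds hc)
  have hev2 : ∀ᶠ n in atTop, 0 < sseq a α (n+2) := hs2.eventually (eventually_gt_nhds hc)
  have hrpos : ∀ n : ℕ, 1 ≤ n → 0 < sseq a α n → 0 < rseq a n := by
    intro n hn hsn
    have hn0 : (0:ℝ) < (n:ℝ) := by exact_mod_cast hn
    have hP : (0:ℝ) < (n:ℝ)^α := Real.rpow_pos_of_pos hn0 α
    have heq : sseq a α n = (n:ℝ)^α * rseq a n := rfl
    nlinarith [heq ▸ hsn]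
  have hbpos : ∀ᶠ n in atTop, 0 < b n := by
    filter_upwards [hev0, eventually_ge_atTop 1] with n hsn hn
    rw [lem_br a hpos b hb n]
    have := hrpos n hn hsn
    have := hpos (n+1)
    positivity
  refine ⟨hbpos, ?_⟩
  have hC1 := lem_C1 α
  have hB1 : Tendsto (fun n : ℕ => sseq a α n * sseq a α (n+2) / (sseq a α (n+1))^2)
      atTop (nhds 1) := by
    have := (hs.mul hs2).div (hs1.pow 2) (by positivity)
    rwa [show c₁ * c₁ / c₁^2 = 1 by rw [show c₁*c₁ = c₁^2 by ring, div_self (by positivity)]] at this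
  have hA := lem_A a c₁ α hα L hL h0
  have hBd := lem_Bdiv a c₁ α hc h0
  have hCl := lem_C α
  have hg : Tendsto (fun n : ℕ =>
      ((n:ℝ)^2 * ((1 + rseq a (n+1))^2 - 1)) *
        (sseq a α n * sseq a α (n+2) / (sseq a α (n+1))^2) * ((1 + ((n:ℝ)*((n:ℝ)+2))⁻¹)^α)
      + ((n:ℝ)^2 * (sseq a α n * sseq a α (n+2) / (sseq a α (n+1))^2 - 1)) *
          ((1 + ((n:ℝ)*((n:ℝ)+2))⁻¹)^α)
      + (n:ℝ)^2 * ((1 + ((n:ℝ)*((n:ℝ)+2))⁻¹)^α - 1)) atTop (nhds (2*c₁*L + α)) := by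
    have key := (((hA.mul hB1).mul hC1).add ((hBd.mul hC1).add hCl))
    rw [show 2*c₁*L*1*1 + (0*1 + α) = 2*c₁*L + α by ring] at key
    refine key.congr fun n => by ring
  refine hg.congr' ?_
  filter_upwards [hev0, hev1, hev2, eventually_ge_atTop 1] with n hsn hsn1 hsn2 hn
  have hn0 : (0:ℝ) < (n:ℝ) := by exact_mod_cast hn
  have hPn : (0:ℝ) < (n:ℝ)^α := Real.rpow_pos_of_pos hn0 α
  have hP1 : (0:ℝ) < ((n:ℝ)+1)^α := Real.rpow_pos_of_pos (by positivity) α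
  have hP2 : (0:ℝ) < ((n:ℝ)+2)^α := Real.rpow_pos_of_pos (by positivity) α
  have hsn' : sseq a α n = (n:ℝ)^α * rseq a n := rfl
  have hsn1' : sseq a α (n+1) = ((n:ℝ)+1)^α * rseq a (n+1) := by
    rw [sseq]; push_cast; ring
  have hsn2' : sseq a α (n+2) = ((n:ℝ)+2)^α * rseq a (n+2) := by
    rw [sseq]; push_cast; ring
  have hr1 : 0 < rseq a (n+1) := hrpos (n+1) (by omega) hsn1
  have hC_eq : (1 + ((n:ℝ)*((n:ℝ)+2))⁻¹)^α
      = (((n:ℝ)+1)^α)^2 / ((n:ℝ)^α * ((n:ℝ)+2)^α) := by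
    have hbase : 1 + ((n:ℝ)*((n:ℝ)+2))⁻¹ = ((n:ℝ)+1)^2 / ((n:ℝ)*((n:ℝ)+2)) := by
      field_simp; ring
    rw [hbase, Real.div_rpow (by positivity) (by positivity),
      Real.mul_rpow hn0.le (by positivity)]
    congr 1
    rw [← Real.rpow_natCast ((n:ℝ)+1) 2, ← Real.rpow_natCast (((n:ℝ)+1)^α) 2,
      ← Real.rpow_mul (by positivity), ← Real.rpow_mul (by positivity)]
    norm_num [mul_comm]
  have hA1 : 1 + rseq a (n+1) = a (n+1) * a (n+3) / (a (n+2))^2 := by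
    show 1 + (a (n+1) * a (n+1+2) / (a (n+1+1))^2 - 1) = _
    norm_num [show n+1+2 = n+3 by omega, show n+1+1 = n+2 by omega]
  have hQ : b n * b (n+2) / (b (n+1))^2
      = (1 + rseq a (n+1))^2 * (sseq a α n * sseq a α (n+2) / (sseq a α (n+1))^2) *
        ((1 + ((n:ℝ)*((n:ℝ)+2))⁻¹)^α) := by
    rw [lem_br a hpos b hb n, lem_br a hpos b hb (n+1), lem_br a hpos b hb (n+2),
      hA1, hC_eq, hsn', hsn1', hsn2']
    have h1 := (hpos (n+1)).ne'
    have h2 := (hpos (n+2)).ne'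
    have h3 := (hpos (n+3)).ne'
    have h4 := hr1.ne'
    have h5 := hPn.ne'
    have h6 := hP1.ne'
    have h7 := hP2.ne'
    show (a (n+1))^2 * rseq a n * ((a (n+2+1))^2 * rseq a (n+2)) /
        ((a (n+1+1))^2 * rseq a (n+1))^2 = _
    rw [show n+2+1 = n+3 from rfl, show n+1+1 = n+2 from rfl]
    field_simp
  rw [hQ]
  ring
end Main



theorem stmt_19 (a : ℕ → ℝ) (hpos : ∀ n, 0 < a n) (c₁ α : ℝ) (hc : 0 < c₁) (hα : 2 ≤ α)
    (h : Filter.Tendsto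
      (fun n : ℕ => (n : ℝ) ^ (α + 2) *
        (a n * a (n + 2) / (a (n + 1)) ^ 2 - 1 - c₁ / (n : ℝ) ^ α))
      Filter.atTop (nhds 0))
    (b : ℕ → ℝ) (hb : ∀ n, b n = a n * a (n + 2) - (a (n + 1)) ^ 2) :
    (∃ N : ℕ, ∀ n ≥ N, 0 < b n) ∧
    (α = 2 →
      Filter.Tendsto (fun n : ℕ => (n : ℝ) ^ 2 * (b n * b (n + 2) / (b (n + 1)) ^ 2 - 1))
        Filter.atTop (nhds (2 * c₁ + α))) ∧
    (2 < α →
      Filter.Tendsto (fun n : ℕ => (n : ℝ) ^ 2 * (b n * b (n + 2) / (b (n + 1)) ^ 2 - 1))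
        Filter.atTop (nhds α)) ∧
    (∃ N : ℕ, ∀ n ≥ N, 0 ≤ b n ∧ b n * b (n + 2) ≥ (b (n + 1)) ^ 2) := by
  have key : (∀ᶠ n in atTop, 0 < b n) ∧
      Tendsto (fun n : ℕ => (n:ℝ)^2 * (b n * b (n+2) / (b (n+1))^2 - 1)) atTop
        (nhds (if α = 2 then 2*c₁ + α else α)) := by
    rcases eq_or_lt_of_le hα with h2 | h2
    · have hz : 2 - α = 0 := by rw [← h2]; ring
      have hL1 : Tendsto (fun n : ℕ => ((n:ℝ)+1)^(2-α)) atTop (nhds 1) := by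
        simp only [hz, Real.rpow_zero]
        exact tendsto_const_nhds
      obtain ⟨k1, k2⟩ := lem_main a c₁ α hpos hc hα h 1 hL1 b hb
      rw [if_pos h2.symm]
      exact ⟨k1, by rwa [show 2*c₁*1 + α = 2*c₁ + α by ring] at k2⟩
    · have hL0 : Tendsto (fun n : ℕ => ((n:ℝ)+1)^(2-α)) atTop (nhds 0) := by
        have := (tendsto_rpow_neg_atTop (show (0:ℝ) < α - 2 by linarith)).comp
          (tendsto_atTop_add_const_right atTop 1 (tendsto_natCast_atTop_atTop (R := ℝ)))
        simpa [Function.comp_def, show -(α-2) = 2-α by ring] using this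
      obtain ⟨k1, k2⟩ := lem_main a c₁ α hpos hc hα h 0 hL0 b hb
      rw [if_neg (by intro hh; rw [hh] at h2; exact lt_irrefl 2 h2)]
      exact ⟨k1, by rwa [show 2*c₁*0 + α = α by ring] at k2⟩
  have hlimpos : 0 < (if α = 2 then 2*c₁ + α else α) := by
    split_ifs <;> linarith
  have evf : ∀ᶠ (n : ℕ) in atTop,
      0 < (n:ℝ)^2 * (b n * b (n+2) / (b (n+1))^2 - 1) :=
    key.2.eventually (eventually_gt_nhds hlimpos)
  obtain ⟨N₁, hN₁⟩ := eventually_atTop.mp key.1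
  obtain ⟨N₂, hN₂⟩ := eventually_atTop.mp evf
  refine ⟨⟨N₁, hN₁⟩, ?_, ?_, ?_⟩
  · intro hα2
    have := key.2
    rwa [if_pos hα2] at this
  · intro hα2
    have := key.2
    rwa [if_neg (by intro hh; rw [hh] at hα2; exact lt_irrefl 2 hα2)] at this
  · refine ⟨max (N₁ + N₂) 1, fun n hn => ?_⟩
    have hn1 : 1 ≤ n := le_trans (le_max_right _ _) hn
    have hnN1 : N₁ ≤ n := le_trans (le_trans (Nat.le_add_right _ _) (le_max_left _ _)) hn
    have hnN2 : N₂ ≤ n := le_trans (le_trans (Nat.le_add_left _ _) (le_max_left _ _)) hn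
    have hb0 := hN₁ n hnN1
    have hb1 := hN₁ (n+1) (by omega)
    refine ⟨hb0.le, ?_⟩
    have hf := hN₂ n hnN2
    have hn2 : (0:ℝ) < (n:ℝ)^2 := by
      have : (0:ℝ) < (n:ℝ) := by exact_mod_cast hn1
      positivity
    have hQ1 : 1 < b n * b (n+2) / (b (n+1))^2 := by nlinarith
    have hb1sq : (0:ℝ) < (b (n+1))^2 := by positivity
    exact le_of_lt ((one_lt_div hb1sq).mp hQ1)
end
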